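/- arXiv:2301.05561 — 6 statements merged into one kernel-verified Lean document; each statement's English description precedes it below -/
import Mathlib

section
/- For all positive integers m and n, ∫₀¹ ({mx} − 1/2)({nx} − 1/2) dx = (1/12)·gcd(m,n)²/(mn). -/
open MeasureTheory intervalIntegral Finset

lemma gaussR (n : ℕ) : ∑ j ∈ Finset.range n, (j:ℝ) = n * ((n:ℝ)-1) / 2 := by
  induction n with
  | zero => simp
  | succ k ih => rw [Finset.sum_range_succ, ih]; push_cast; ring

noncomputable def FF (x : ℝ) : ℝ := Int.fract x - 1/2

lemma FF_add_int (x : ℝ) (k : ℤ) : FF (x + k) = FF x := by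
  simp [FF, Int.fract_add_intCast]

lemma FF_add_nat (x : ℝ) (k : ℕ) : FF (x + k) = FF x := by
  simpa using FF_add_int x k

lemma FF_add_one (x : ℝ) : FF (x + 1) = FF x := by
  simpa using FF_add_int x 1

lemma abs_FF_le (x : ℝ) : |FF x| ≤ 1 := by
  have h1 := Int.fract_nonneg x
  have h2 := Int.fract_lt_one x
  rw [FF, abs_le]; constructor <;> nlinarith

lemma FF_measurable : Measurable FF :=
  measurable_fract.sub measurable_const

lemma FF_intInt (c e d f a b : ℝ) :
    IntervalIntegrable (fun x => FF (c * x + e) * FF (d * x + f)) volume a b := by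
  apply IntervalIntegrable.mono_fun' (g := fun _ => (1:ℝ)) intervalIntegrable_const
  · exact (((FF_measurable.comp ((measurable_const_mul c).add_const e)).mul
      (FF_measurable.comp ((measurable_const_mul d).add_const f)))).aestronglyMeasurable
  · refine Filter.Eventually.of_forall fun x => ?_
    have h1 := abs_FF_le (c * x + e); have h2 := abs_FF_le (d * x + f)
    show ‖FF (c * x + e) * FF (d * x + f)‖ ≤ 1
    rw [Real.norm_eq_abs, abs_mul]
    nlinarith [abs_nonneg (FF (c*x+e)), abs_nonneg (FF (d*x+f))]

lemma FF_intInt' (c d a b : ℝ) :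
    IntervalIntegrable (fun x => FF (c * x) * FF (d * x)) volume a b := by
  simpa using FF_intInt c 0 d 0 a b

/-- The multiplication (Raabe) formula for the sawtooth. -/
lemma sumFF (n : ℕ) (hn : 0 < n) (x : ℝ) :
    ∑ j ∈ Finset.range n, FF ((x + j) / n) = FF x := by
  have hn' : (0:ℝ) < n := by exact_mod_cast hn
  set H : ℝ → ℝ := fun x => ∑ j ∈ Finset.range n, FF ((x + j) / n) with hH
  have hper : Function.Periodic H 1 := by
    intro x
    have key : ∀ j : ℕ, FF ((x + 1 + j) / n) = FF ((x + ((j:ℕ)+1:ℕ)) / n) := by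
      intro j; push_cast; ring_nf
    calc H (x + 1) = ∑ j ∈ Finset.range n, FF ((x + ((j:ℕ)+1:ℕ)) / n) :=
          Finset.sum_congr rfl fun j _ => key j
      _ = (∑ j ∈ Finset.range (n+1), FF ((x + j) / n)) - FF ((x + (0:ℕ)) / n) := by
          rw [Finset.sum_range_succ' (fun j => FF ((x + (j:ℕ)) / n)) n]
          ring
      _ = H x := by
          rw [Finset.sum_range_succ]
          have he : FF ((x + (n:ℕ)) / n) = FF ((x + (0:ℕ)) / n) := by
            have : (x + (n:ℕ)) / n = (x + (0:ℕ))/n + 1 := by field_simp; simp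
            rw [this, FF_add_one]
          rw [he]; simp [hH]
  have base : ∀ y : ℝ, 0 ≤ y → y < 1 → H y = FF y := by
    intro y h0 h1
    have hval : ∀ j ∈ Finset.range n, FF ((y + j) / n) = (y + j) / n - 1/2 := by
      intro j hj
      have hj' : (j:ℝ) ≤ (n:ℝ) - 1 := by
        have hlt := Finset.mem_range.1 hj
        have : (j:ℝ) + 1 ≤ n := by exact_mod_cast hlt
        linarith
      have hfr : Int.fract ((y + j) / n) = (y + j) / n := by
        apply Int.fract_eq_self.2
        constructor
        · positivity
        · rw [div_lt_one hn']; linarith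
      simp [FF, hfr]
    have hgauss := gaussR n
    have hsum : H y = y - 1/2 := by
      rw [hH]
      simp only []
      rw [Finset.sum_congr rfl hval]
      have : ∑ j ∈ Finset.range n, ((y + (j:ℝ)) / n - 1/2)
          = (∑ j ∈ Finset.range n, (y + (j:ℝ))) / n - n * (1/2) := by
        rw [Finset.sum_sub_distrib, Finset.sum_const, Finset.card_range, ← Finset.sum_div]
        push_cast; ring
      rw [this, Finset.sum_add_distrib, Finset.sum_const, Finset.card_range, hgauss]
      push_cast
      field_simp
      ring
    rw [hsum, FF, Int.fract_eq_self.2 ⟨h0, h1⟩]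
  have hfr : H x = H (Int.fract x) := by
    have h2 := hper.sub_int_mul_eq (x := x) ⌊x⌋
    rw [mul_one] at h2
    rw [← h2, Int.self_sub_floor]
  show H x = FF x
  rw [hfr, base _ (Int.fract_nonneg x) (Int.fract_lt_one x), FF,
    Int.fract_fract, ← FF]

lemma sumFF' (n : ℕ) (hn : 0 < n) (y : ℝ) :
    ∑ j ∈ Finset.range n, FF (y + j / n) = FF (n * y) := by
  have h := sumFF n hn (n * y)
  have hn' : (n:ℝ) ≠ 0 := by positivity
  rw [← h]
  refine Finset.sum_congr rfl fun j _ => ?_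
  congr 1
  field_simp

lemma FF_nat_shift (n : ℕ) (hn : 0 < n) (y : ℝ) (k : ℕ) :
    FF (y + (k:ℝ) / n) = FF (y + ((k % n : ℕ):ℝ) / n) := by
  have hn' : (n:ℝ) ≠ 0 := by positivity
  conv_lhs => rw [← Nat.div_add_mod k n]
  have h : ((n * (k / n) + k % n : ℕ) : ℝ) / n = ((k % n : ℕ):ℝ)/n + ((k / n : ℕ):ℝ) := by
    push_cast; field_simp; ring
  rw [h, ← add_assoc, FF_add_nat]

lemma sum_zmod (n : ℕ) [NeZero n] (ψ : ZMod n → ℝ) :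
    ∑ j ∈ Finset.range n, ψ (j : ZMod n) = ∑ z : ZMod n, ψ z := by
  apply Finset.sum_nbij' (fun j => ((j : ℕ) : ZMod n)) (fun z => z.val)
  · intros; exact Finset.mem_univ _
  · intro z _; exact Finset.mem_range.2 (ZMod.val_lt z)
  · intro j hj; rw [ZMod.val_natCast, Nat.mod_eq_of_lt (Finset.mem_range.1 hj)]
  · intro z _; exact ZMod.natCast_rightInverse z
  · intros; rfl

lemma sum_FF_mul_shift (m n : ℕ) (hn : 0 < n) (h : Nat.Coprime m n) (y : ℝ) :
    ∑ j ∈ Finset.range n, FF (y + ((m * j : ℕ):ℝ) / n)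
      = ∑ j ∈ Finset.range n, FF (y + (j:ℝ) / n) := by
  haveI : NeZero n := ⟨hn.ne'⟩
  set φ : ZMod n → ℝ := fun z => FF (y + (z.val : ℝ) / n) with hφ
  have hA : ∀ k : ℕ, FF (y + (k:ℝ) / n) = φ ((k : ℕ) : ZMod n) := by
    intro k
    rw [FF_nat_shift n hn y k, hφ]
    simp [ZMod.val_natCast]
  have h1 : ∑ j ∈ Finset.range n, FF (y + ((m * j : ℕ):ℝ) / n)
      = ∑ z : ZMod n, φ ((m : ZMod n) * z) := by
    rw [← sum_zmod n (fun z => φ ((m : ZMod n) * z))]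
    refine Finset.sum_congr rfl fun j _ => ?_
    rw [hA (m * j)]
    push_cast
    rfl
  have h2 : ∑ j ∈ Finset.range n, FF (y + (j:ℝ) / n) = ∑ z : ZMod n, φ z := by
    rw [← sum_zmod n φ]
    exact Finset.sum_congr rfl fun j _ => hA j
  rw [h1, h2]
  have hu : ((ZMod.unitOfCoprime m h : (ZMod n)ˣ) : ZMod n) = (m : ZMod n) :=
    ZMod.coe_unitOfCoprime m h
  calc ∑ z : ZMod n, φ ((m : ZMod n) * z)
      = ∑ z : ZMod n, φ ((ZMod.unitOfCoprime m h : (ZMod n)ˣ) * z) := by rw [hu]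
    _ = ∑ z : ZMod n, φ z :=
      Fintype.sum_bijective _ (Units.mulLeft_bijective (ZMod.unitOfCoprime m h))
        _ _ (fun z => rfl)

lemma I_one : ∫ x in (0:ℝ)..1, FF x * FF x = 1/12 := by
  have hcong : ∫ x in (0:ℝ)..1, FF x * FF x = ∫ x in (0:ℝ)..1, (x - 1/2)^2 := by
    apply intervalIntegral.integral_congr_ae
    have hne : ∀ᵐ x : ℝ, x ≠ 1 := by
      refine (MeasureTheory.ae_iff).2 ?_
      simp [Set.setOf_eq_eq_singleton]
    filter_upwards [hne] with x hx hmem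
    rw [Set.uIoc_of_le (by norm_num : (0:ℝ) ≤ 1)] at hmem
    have h1 : x < 1 := lt_of_le_of_ne hmem.2 hx
    have h0 : 0 ≤ x := le_of_lt hmem.1
    rw [FF, Int.fract_eq_self.2 ⟨h0, h1⟩]
    ring
  rw [hcong]
  have e : (fun x : ℝ => (x - 1/2)^2) = fun x => x^2 - x + 1/4 := by funext x; ring
  rw [e]
  rw [intervalIntegral.integral_add ((intervalIntegrable_pow 2).sub intervalIntegrable_id)
    intervalIntegrable_const]
  rw [intervalIntegral.integral_sub (intervalIntegrable_pow 2) intervalIntegrable_id]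
  rw [integral_pow, integral_id, intervalIntegral.integral_const]
  norm_num

lemma keyK (m n : ℕ) (hm : 0 < m) (hn : 0 < n) (h : Nat.Coprime m n) :
    ∫ x in (0:ℝ)..1, FF (m*x) * FF (n*x)
      = (1/(n:ℝ)) * ∫ x in (0:ℝ)..1, FF (m*x) * FF x := by
  have hn' : (0:ℝ) < n := by exact_mod_cast hn
  set g : ℝ → ℝ := fun t => FF ((m:ℝ)*t/n) * FF t with hg
  have hgint : ∀ a b : ℝ, IntervalIntegrable g volume a b := by
    intro a b
    simpa [hg, mul_div_assoc, div_mul_eq_mul_div, mul_comm] using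
      FF_intInt ((m:ℝ)/n) 0 1 0 a b
  have step1 : ∫ x in (0:ℝ)..1, FF (m*x) * FF (n*x)
      = (n:ℝ)⁻¹ * ∫ t in (0:ℝ)..(n:ℝ), g t := by
    have hcomp : ∀ x : ℝ, g ((n:ℝ)*x) = FF ((m:ℝ)*x) * FF ((n:ℝ)*x) := by
      intro x
      have hx : (m:ℝ)*((n:ℝ)*x)/(n:ℝ) = (m:ℝ)*x := by field_simp
      show FF ((m:ℝ)*((n:ℝ)*x)/n) * FF ((n:ℝ)*x) = _
      rw [hx]
    have hsub := intervalIntegral.integral_comp_mul_left (a := (0:ℝ)) (b := 1) g (ne_of_gt hn')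
    norm_num at hsub
    calc ∫ x in (0:ℝ)..1, FF (m*x) * FF (n*x) = ∫ x in (0:ℝ)..1, g ((n:ℝ)*x) := by
          refine intervalIntegral.integral_congr fun x _ => (hcomp x).symm
      _ = (n:ℝ)⁻¹ * ∫ t in (0:ℝ)..(n:ℝ), g t := by rw [hsub]
  have step2 : ∫ t in (0:ℝ)..(n:ℝ), g t
      = ∑ j ∈ Finset.range n, ∫ t in ((j:ℕ):ℝ)..(((j:ℕ)+1:ℕ):ℝ), g t := by
    rw [intervalIntegral.sum_integral_adjacent_intervals (a := fun k => ((k:ℕ):ℝ))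
      (fun k _ => hgint _ _), Nat.cast_zero]
  have step3 : ∀ j : ℕ, (∫ t in ((j:ℕ):ℝ)..(((j:ℕ)+1:ℕ):ℝ), g t)
      = ∫ x in (0:ℝ)..1, g (x + j) := by
    intro j
    rw [intervalIntegral.integral_comp_add_right g (j:ℝ)]
    congr 1 <;> push_cast <;> ring
  have step4 : ∀ j : ℕ, ∀ x : ℝ, g (x + j)
      = FF ((m:ℝ)*x/n + ((m*j : ℕ):ℝ)/n) * FF x := by
    intro j x
    rw [hg]
    simp only []
    rw [FF_add_nat x j]
    congr 2
    push_cast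
    field_simp
  have step5 : ∫ t in (0:ℝ)..(n:ℝ), g t = ∫ x in (0:ℝ)..1, FF ((m:ℝ)*x) * FF x := by
    rw [step2]
    have : ∀ j ∈ Finset.range n, (∫ t in ((j:ℕ):ℝ)..(((j:ℕ)+1:ℕ):ℝ), g t)
        = ∫ x in (0:ℝ)..1, FF ((m:ℝ)*x/n + ((m*j : ℕ):ℝ)/n) * FF x := by
      intro j _
      rw [step3 j]
      exact intervalIntegral.integral_congr fun x _ => step4 j x
    rw [Finset.sum_congr rfl this]
    rw [← intervalIntegral.integral_finset_sum]
    · apply intervalIntegral.integral_congr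
      intro x _
      show (∑ j ∈ Finset.range n, FF ((m:ℝ)*x/n + ((m*j : ℕ):ℝ)/n) * FF x)
          = FF ((m:ℝ)*x) * FF x
      have hfac : ∑ j ∈ Finset.range n, FF ((m:ℝ)*x/n + ((m*j : ℕ):ℝ)/n) * FF x
          = (∑ j ∈ Finset.range n, FF ((m:ℝ)*x/n + ((m*j : ℕ):ℝ)/n)) * FF x := by
        rw [Finset.sum_mul]
      rw [hfac, sum_FF_mul_shift m n hn h ((m:ℝ)*x/n), sumFF' n hn ((m:ℝ)*x/n)]
      have : (n:ℝ) * ((m:ℝ)*x/n) = (m:ℝ)*x := by field_simp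
      rw [this]
    · intro j _
      simpa [mul_div_assoc, div_mul_eq_mul_div] using
        FF_intInt ((m:ℝ)/n) (((m*j : ℕ):ℝ)/n) 1 0 0 1
  rw [step1, step5, one_div]

lemma I_m_one (m : ℕ) (hm : 0 < m) :
    ∫ x in (0:ℝ)..1, FF (m*x) * FF x = 1/(12*(m:ℝ)) := by
  have h := keyK 1 m one_pos hm (Nat.coprime_one_left m)
  have e1 : ∫ x in (0:ℝ)..1, FF ((1:ℕ)*x) * FF ((m:ℕ)*x)
      = ∫ x in (0:ℝ)..1, FF (m*x) * FF x := by
    apply intervalIntegral.integral_congr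
    intro x _
    push_cast
    rw [one_mul, mul_comm]
  have e2 : ∫ x in (0:ℝ)..1, FF ((1:ℕ)*x) * FF x = ∫ x in (0:ℝ)..1, FF x * FF x := by
    apply intervalIntegral.integral_congr
    intro x _
    push_cast
    rw [one_mul]
  rw [e1, e2, I_one] at h
  rw [h]
  field_simp

lemma I_coprime (m n : ℕ) (hm : 0 < m) (hn : 0 < n) (h : Nat.Coprime m n) :
    ∫ x in (0:ℝ)..1, FF (m*x) * FF (n*x) = 1/(12*(m:ℝ)*n) := by
  rw [keyK m n hm hn h, I_m_one m hm]
  have hm' : (0:ℝ) < m := by exact_mod_cast hm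
  have hn' : (0:ℝ) < n := by exact_mod_cast hn
  field_simp

lemma I_reduce (d m' n' : ℕ) (hd : 0 < d) (hm : 0 < m') (hn : 0 < n') :
    ∫ x in (0:ℝ)..1, FF ((d*m' : ℕ)*x) * FF ((d*n' : ℕ)*x)
      = ∫ x in (0:ℝ)..1, FF (m'*x) * FF (n'*x) := by
  have hd' : (0:ℝ) < d := by exact_mod_cast hd
  set g : ℝ → ℝ := fun t => FF ((m':ℝ)*t) * FF ((n':ℝ)*t) with hg
  have hper : Function.Periodic g 1 := by
    intro t
    rw [hg]
    simp only []
    have e1 : (m':ℝ)*(t+1) = (m':ℝ)*t + (m':ℕ) := by push_cast; ring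
    have e2 : (n':ℝ)*(t+1) = (n':ℝ)*t + (n':ℕ) := by push_cast; ring
    rw [e1, e2, FF_add_nat, FF_add_nat]
  have hint : ∀ a b : ℝ, IntervalIntegrable g volume a b := fun a b =>
    FF_intInt' (m':ℝ) (n':ℝ) a b
  have key : ∫ t in (0:ℝ)..(d:ℝ), g t = (d:ℝ) * ∫ t in (0:ℝ)..1, g t := by
    have h2 := hper.intervalIntegral_add_zsmul_eq (d:ℤ) 0 hint
    simpa using h2
  calc ∫ x in (0:ℝ)..1, FF ((d*m' : ℕ)*x) * FF ((d*n' : ℕ)*x)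
      = ∫ x in (0:ℝ)..1, g ((d:ℝ)*x) := by
        apply intervalIntegral.integral_congr
        intro x _
        rw [hg]
        simp only []
        push_cast
        ring_nf
    _ = (d:ℝ)⁻¹ * ∫ t in (0:ℝ)..(d:ℝ), g t := by
        have hsub := intervalIntegral.integral_comp_mul_left (a := (0:ℝ)) (b := 1) g (ne_of_gt hd')
        norm_num at hsub
        rw [hsub]
    _ = ∫ t in (0:ℝ)..1, g t := by
        rw [key]
        field_simp

theorem stmt_4 (m n : ℕ) (hm : 0 < m) (hn : 0 < n) :
    ∫ x in (0:ℝ)..1, (Int.fract ((m : ℝ) * x) - 1/2) * (Int.fract ((n : ℝ) * x) - 1/2)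
      = (1/12) * (Nat.gcd m n : ℝ) ^ 2 / ((m : ℝ) * n) := by
  set d := Nat.gcd m n with hd
  have hdpos : 0 < d := Nat.gcd_pos_of_pos_left n hm
  set m' := m / d with hm'
  set n' := n / d with hn'
  have hmeq : m = d * m' := (Nat.div_mul_cancel (Nat.gcd_dvd_left m n)).symm.trans (mul_comm _ _)
  have hneq : n = d * n' := (Nat.div_mul_cancel (Nat.gcd_dvd_right m n)).symm.trans (mul_comm _ _)
  have hm'pos : 0 < m' := Nat.div_pos (Nat.le_of_dvd hm (Nat.gcd_dvd_left m n)) hdpos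
  have hn'pos : 0 < n' := Nat.div_pos (Nat.le_of_dvd hn (Nat.gcd_dvd_right m n)) hdpos
  have hcop : Nat.Coprime m' n' := Nat.coprime_div_gcd_div_gcd hdpos
  have hFF : ∫ x in (0:ℝ)..1, (Int.fract ((m : ℝ) * x) - 1/2) * (Int.fract ((n : ℝ) * x) - 1/2)
      = ∫ x in (0:ℝ)..1, FF (m*x) * FF (n*x) := rfl
  rw [hFF]
  rw [show ∫ x in (0:ℝ)..1, FF (m*x) * FF (n*x)
      = ∫ x in (0:ℝ)..1, FF ((d*m' : ℕ)*x) * FF ((d*n' : ℕ)*x) by rw [← hmeq, ← hneq]]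
  rw [I_reduce d m' n' hdpos hm'pos hn'pos, I_coprime m' n' hm'pos hn'pos hcop]
  have hd' : (0:ℝ) < d := by exact_mod_cast hdpos
  have hm'' : (0:ℝ) < m' := by exact_mod_cast hm'pos
  have hn'' : (0:ℝ) < n' := by exact_mod_cast hn'pos
  have hmr : (m:ℝ) = d * m' := by exact_mod_cast hmeq
  have hnr : (n:ℝ) = d * n' := by exact_mod_cast hneq
  rw [hmr, hnr]
  field_simp
end

section
/- Let (n_k) be a sequence of distinct positive integers and N ≥ 1. Then ∫₀¹ (∑_{k=1}^N ({n_k x} − 1/2))² dx = (1/12) ∑_{k=1}^N ∑_{ℓ=1}^N gcd(n_k, n_ℓ)²/(n_k n_ℓ). -/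
open MeasureTheory intervalIntegral

noncomputable def BB (x : ℝ) : ℝ := Int.fract x - 1/2

lemma BB_per : Function.Periodic BB 1 := fun x => by simp [BB, Int.fract_add_one]

lemma BB_int_per (m : ℤ) (x : ℝ) : BB (x + m) = BB x := by simp [BB, Int.fract_add_intCast]

lemma BB_meas : Measurable BB := measurable_fract.sub measurable_const

lemma BB_abs (x : ℝ) : |BB x| ≤ 1/2 := by
  rw [abs_le]
  constructor
  · simp only [BB]; linarith [Int.fract_nonneg x]
  · simp only [BB]; linarith [Int.fract_lt_one x]

lemma II (p q s t u v : ℝ) :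
    IntervalIntegrable (fun x => BB (p*x+s) * BB (q*x+t)) volume u v := by
  apply IntervalIntegrable.mono_fun' (g := fun _ => (1/2 : ℝ) * (1/2))
  · exact intervalIntegrable_const
  · exact ((BB_meas.comp ((measurable_const.mul measurable_id).add measurable_const)).mul
      (BB_meas.comp ((measurable_const.mul measurable_id).add measurable_const))).aestronglyMeasurable
  · filter_upwards with x
    calc |BB (p*x+s) * BB (q*x+t)| = |BB (p*x+s)| * |BB (q*x+t)| := abs_mul _ _
    _ ≤ (1/2) * (1/2) := mul_le_mul (BB_abs _) (BB_abs _) (abs_nonneg _) (by norm_num)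

lemma frac_aux (b : ℕ) (hb : 0 < b) (k : ℤ) (θ : ℝ) (h0 : 0 ≤ θ) (h1 : θ < 1) :
    Int.fract (((k:ℝ) + θ)/b) = (((k % b : ℤ) : ℝ) + θ)/b := by
  have hb' : (0:ℝ) < b := by exact_mod_cast hb
  have hk : (k:ℝ) = b * ((k / b : ℤ) : ℝ) + ((k % b : ℤ) : ℝ) := by
    exact_mod_cast (Int.mul_ediv_add_emod k b).symm
  have hrw : ((k:ℝ) + θ)/b = ((k / b : ℤ) : ℝ) + (((k % b : ℤ) : ℝ) + θ)/b := by
    field_simp [hk]; linarith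
  rw [hrw, Int.fract_intCast_add]
  apply Int.fract_eq_self.mpr
  have hm0 : (0:ℝ) ≤ ((k % b : ℤ) : ℝ) := by
    exact_mod_cast Int.emod_nonneg k (by exact_mod_cast hb.ne')
  have hm1 : ((k % b : ℤ) : ℝ) < b := by
    exact_mod_cast Int.emod_lt_of_pos k (by exact_mod_cast hb)
  have hm1' : ((k % b : ℤ) : ℝ) ≤ b - 1 := by
    have : k % b ≤ (b:ℤ) - 1 := by
      have := Int.emod_lt_of_pos k (show (0:ℤ) < b by exact_mod_cast hb); omega
    calc ((k % b : ℤ) : ℝ) ≤ ((b:ℤ):ℝ) - 1 := by exact_mod_cast this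
    _ = (b:ℝ) - 1 := by push_cast; ring
  constructor
  · positivity
  · rw [div_lt_one hb']; linarith

lemma sum_emod (b : ℕ) (hb : 0 < b) (m : ℤ) (f : ℤ → ℝ) :
    ∑ j ∈ Finset.range b, f ((m + j) % b) = ∑ j ∈ Finset.range b, f j := by
  refine Finset.sum_nbij' (fun j => ((m + (j:ℤ)) % b).toNat)
    (fun r => (((r:ℤ) - m) % b).toNat) ?_ ?_ ?_ ?_ ?_
  · intro j hj
    simp only [Finset.mem_range] at *
    have h1 : (0:ℤ) < b := by exact_mod_cast hb
    have := Int.emod_lt_of_pos (m + j) h1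
    have := Int.emod_nonneg (m + j) h1.ne'
    omega
  · intro r hr
    simp only [Finset.mem_range] at *
    have h1 : (0:ℤ) < b := by exact_mod_cast hb
    have := Int.emod_lt_of_pos ((r:ℤ) - m) h1
    have := Int.emod_nonneg ((r:ℤ) - m) h1.ne'
    omega
  · intro j hj
    beta_reduce
    simp only [Finset.mem_range] at hj
    have h1 : (0:ℤ) < b := by exact_mod_cast hb
    have h2 := Int.emod_nonneg (m + j) h1.ne'
    have h3 : ((((m + (j:ℤ)) % b).toNat : ℤ) - m) % b = (j:ℤ) % b := by
      rw [Int.toNat_of_nonneg h2, Int.sub_emod, Int.emod_emod_of_dvd _ dvd_rfl]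
      rw [← Int.sub_emod]; ring_nf
    have h4 : (j:ℤ) % b = j := Int.emod_eq_of_lt (by positivity) (by exact_mod_cast hj)
    omega
  · intro r hr
    beta_reduce
    simp only [Finset.mem_range] at hr
    have h1 : (0:ℤ) < b := by exact_mod_cast hb
    have h2 := Int.emod_nonneg ((r:ℤ) - m) h1.ne'
    have h3 : (m + ((((r:ℤ) - m) % b).toNat : ℤ)) % b = (r:ℤ) % b := by
      rw [Int.toNat_of_nonneg h2, Int.add_emod, Int.emod_emod_of_dvd _ dvd_rfl, ← Int.add_emod]
      ring_nf
    have h4 : (r:ℤ) % b = r := Int.emod_eq_of_lt (by positivity) (by exact_mod_cast hr)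
    omega
  · intro j hj
    congr 1
    have h1 : (0:ℤ) < b := by exact_mod_cast hb
    exact (Int.toNat_of_nonneg (Int.emod_nonneg _ h1.ne')).symm

lemma BB_mult (b : ℕ) (hb : 0 < b) (x : ℝ) :
    ∑ j ∈ Finset.range b, BB (x + j/b) = BB (b*x) := by
  have hb' : (0:ℝ) < b := by exact_mod_cast hb
  set m := ⌊(b:ℝ)*x⌋ with hm
  set θ := Int.fract ((b:ℝ)*x) with hθ
  have hmθ : (b:ℝ)*x = (m:ℝ) + θ := (Int.floor_add_fract _).symm
  have hx : x = ((m:ℝ) + θ)/b := by rw [← hmθ]; field_simp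
  have hterm : ∀ j ∈ Finset.range b,
      BB (x + j/b) = ((((m+j) % b : ℤ) : ℝ) + θ)/b - 1/2 := by
    intro j hj
    have hxe : x + (j:ℝ)/b = ((((m+(j:ℤ)) : ℤ) : ℝ) + θ)/b := by
      rw [hx]; push_cast; ring
    rw [BB, hxe, frac_aux b hb (m+j) θ (Int.fract_nonneg _) (Int.fract_lt_one _)]
  rw [Finset.sum_congr rfl hterm]
  have hs : ∑ j ∈ Finset.range b, (((((m+(j:ℤ)) % b : ℤ) : ℝ) + θ)/b - 1/2)
      = (∑ j ∈ Finset.range b, ((((m+(j:ℤ)) % b : ℤ) : ℝ)))/b + (b:ℝ)*(θ/b - 1/2) := by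
    calc ∑ j ∈ Finset.range b, (((((m+(j:ℤ)) % b : ℤ) : ℝ) + θ)/b - 1/2)
        = ∑ j ∈ Finset.range b, (((((m+(j:ℤ)) % b : ℤ) : ℝ))/b + (θ/b - 1/2)) :=
          Finset.sum_congr rfl (fun j _ => by ring)
      _ = (∑ j ∈ Finset.range b, ((((m+(j:ℤ)) % b : ℤ) : ℝ))/b) + (b:ℝ)*(θ/b - 1/2) := by
          rw [Finset.sum_add_distrib, Finset.sum_const, Finset.card_range, nsmul_eq_mul]
      _ = (∑ j ∈ Finset.range b, ((((m+(j:ℤ)) % b : ℤ) : ℝ)))/b + (b:ℝ)*(θ/b - 1/2) := by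
          rw [Finset.sum_div]
  rw [hs, sum_emod b hb m (fun k => ((k : ℤ) : ℝ))]
  have hs2 : ∑ j ∈ Finset.range b, (((j:ℤ) : ℝ)) = ((b:ℝ)*((b:ℝ)-1))/2 := by
    have h2 := Finset.sum_range_id_mul_two b
    have hb1 : 1 ≤ b := hb
    have key : ((∑ j ∈ Finset.range b, j : ℕ) : ℝ) * 2 = ((b*(b-1) : ℕ) : ℝ) := by
      exact_mod_cast congrArg (Nat.cast : ℕ → ℝ) h2
    rw [Nat.cast_mul, Nat.cast_sub hb1] at key
    push_cast at key ⊢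
    linarith
  rw [hs2]
  have hBB : BB ((b:ℝ)*x) = θ - 1/2 := by rw [BB]
  rw [hBB]
  field_simp
  ring

lemma ae_ne (c : ℝ) : ∀ᵐ (x:ℝ), x ≠ c := by
  rw [MeasureTheory.ae_iff]
  have : {x : ℝ | ¬ x ≠ c} = {c} := by ext y; simp
  rw [this]
  exact Real.volume_singleton

lemma seg_integral (nn k : ℕ) (hn : 0 < nn) (hk : k < nn) :
    ∫ x in ((k:ℝ)/nn)..(((k:ℝ)+1)/nn), BB (nn*x) * BB x = 1/(12*(nn:ℝ)^2) := by
  have hn' : (0:ℝ) < nn := by exact_mod_cast hn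
  have hk1 : (k:ℝ) + 1 ≤ nn := by exact_mod_cast hk
  have hle : (k:ℝ)/nn ≤ ((k:ℝ)+1)/nn := by gcongr; linarith
  have hcongr : ∫ x in ((k:ℝ)/nn)..(((k:ℝ)+1)/nn), BB (nn*x) * BB x
      = ∫ x in ((k:ℝ)/nn)..(((k:ℝ)+1)/nn),
          ((nn:ℝ)*x - ((k:ℝ)+1/2)) * (x - 1/2) := by
    apply intervalIntegral.integral_congr_ae
    filter_upwards [ae_ne (((k:ℝ)+1)/nn)] with x hx hmem
    rw [Set.uIoc_of_le hle] at hmem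
    obtain ⟨h1, h2⟩ := hmem
    have h2' : x < ((k:ℝ)+1)/nn := lt_of_le_of_ne h2 hx
    have hx0 : 0 ≤ x := le_trans (by positivity) h1.le
    have hx1 : x < 1 := lt_of_lt_of_le h2' (by rw [div_le_one hn']; linarith)
    have hfx : Int.fract x = x := Int.fract_eq_self.mpr ⟨hx0, hx1⟩
    have hklt : (k:ℝ) < nn*x := by
      rw [div_lt_iff₀ hn', mul_comm] at h1; exact h1
    have hklt2 : nn*x < (k:ℝ)+1 := by
      rw [lt_div_iff₀ hn', mul_comm] at h2'; exact h2'
    have hfl : ⌊(nn:ℝ)*x⌋ = (k:ℤ) := by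
      rw [Int.floor_eq_iff]
      constructor
      · push_cast; linarith
      · push_cast; linarith
    have hfnx : Int.fract ((nn:ℝ)*x) = nn*x - k := by
      rw [Int.fract, hfl]; push_cast; ring
    simp only [BB, hfx, hfnx]
    ring
  rw [hcongr]
  have hfun : (fun x : ℝ => ((nn:ℝ)*x - ((k:ℝ)+1/2)) * (x - 1/2))
      = fun x : ℝ => (nn:ℝ)*x^2 - (((k:ℝ)+1/2) + (nn:ℝ)/2)*x + ((k:ℝ)+1/2)/2 := by
    funext x; ring
  rw [hfun]
  have i1 : IntervalIntegrable (fun x : ℝ => (nn:ℝ)*x^2) volume ((k:ℝ)/nn) (((k:ℝ)+1)/nn) :=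
    (continuous_const.mul (continuous_pow 2)).intervalIntegrable _ _
  have i2 : IntervalIntegrable (fun x : ℝ => (((k:ℝ)+1/2) + (nn:ℝ)/2)*x) volume ((k:ℝ)/nn) (((k:ℝ)+1)/nn) :=
    (continuous_const.mul continuous_id).intervalIntegrable _ _
  rw [intervalIntegral.integral_add ((i1.sub i2)) (intervalIntegrable_const),
      intervalIntegral.integral_sub i1 i2,
      intervalIntegral.integral_const_mul, intervalIntegral.integral_const_mul,
      integral_pow, integral_id, intervalIntegral.integral_const]
  have hnn : (nn:ℝ) ≠ 0 := hn'.ne'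
  simp only [smul_eq_mul]
  field_simp
  have h3 : (nn:ℝ)^3 * (nn:ℝ)⁻¹^3 = 1 := by rw [← mul_pow, mul_inv_cancel₀ hnn, one_pow]
  linear_combination (144*(k:ℝ) + 144*(k:ℝ)^2 + 48) * h3

lemma II2 (p q : ℝ) (u v : ℝ) :
    IntervalIntegrable (fun x => BB (p*x) * BB (q*x)) volume u v := by
  have := II p q 0 0 u v
  simpa using this

lemma C1 (nn : ℕ) (hn : 0 < nn) : ∫ x in (0:ℝ)..1, BB (nn*x) * BB x = 1/(12*nn) := by
  have hn' : (0:ℝ) < nn := by exact_mod_cast hn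
  have hsplit : ∫ x in (0:ℝ)..1, BB (nn*x) * BB x
      = ∑ k ∈ Finset.range nn, ∫ x in ((k:ℝ)/nn)..(((k:ℝ)+1)/nn), BB (nn*x) * BB x := by
    have := intervalIntegral.sum_integral_adjacent_intervals
      (a := fun k : ℕ => (k:ℝ)/nn) (μ := volume) (f := fun x => BB (nn*x) * BB x) (n := nn)
      (fun k hk => by simpa using II nn 1 0 0 ((k:ℝ)/nn) (((k:ℝ)+1)/nn))
    simp only [Nat.cast_zero, zero_div] at this
    rw [div_self hn'.ne'] at this
    rw [← this]
    apply Finset.sum_congr rfl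
    intro k hk
    norm_num
  rw [hsplit]
  rw [Finset.sum_congr rfl (fun k hk => seg_integral nn k hn (Finset.mem_range.mp hk))]
  rw [Finset.sum_const, Finset.card_range, nsmul_eq_mul]
  field_simp

lemma sumA (a b : ℕ) (hb : 0 < b) (hab : Nat.Coprime a b) (f : ℕ → ℝ) :
    ∑ j ∈ Finset.range b, f ((a*j) % b) = ∑ j ∈ Finset.range b, f j := by
  rcases eq_or_lt_of_le (show 1 ≤ b from hb) with h1 | h1
  · simp [← h1]
  obtain ⟨c, -, hc⟩ := Nat.exists_mul_mod_eq_one_of_coprime hab h1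
  refine Finset.sum_nbij' (fun j => (a*j) % b) (fun r => (c*r) % b) ?_ ?_ ?_ ?_ ?_
  · intro j _; exact Finset.mem_range.mpr (Nat.mod_lt _ hb)
  · intro r _; exact Finset.mem_range.mpr (Nat.mod_lt _ hb)
  · intro j hj
    beta_reduce
    simp only [Finset.mem_range] at hj
    have h2 : (c * ((a*j) % b)) % b = (c * (a * j)) % b :=
      Nat.ModEq.mul_left c (Nat.mod_modEq (a*j) b)
    rw [h2, show c*(a*j) = (a*c)*j by ring, Nat.mul_mod, hc, one_mul, Nat.mod_mod_of_dvd _ dvd_rfl,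
      Nat.mod_eq_of_lt hj]
  · intro r hr
    beta_reduce
    simp only [Finset.mem_range] at hr
    have h2 : (a * ((c*r) % b)) % b = (a * (c * r)) % b :=
      Nat.ModEq.mul_left a (Nat.mod_modEq (c*r) b)
    rw [h2, show a*(c*r) = (a*c)*r by ring, Nat.mul_mod, hc, one_mul, Nat.mod_mod_of_dvd _ dvd_rfl,
      Nat.mod_eq_of_lt hr]
  · intro j _; rfl

lemma sumB (b : ℕ) (hb : 0 < b) (f : ℕ → ℝ) :
    ∑ j ∈ Finset.range b, f ((b - j) % b) = ∑ j ∈ Finset.range b, f j := by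
  have hmem : ∀ j, j ∈ Finset.range b → (b - j) % b ∈ Finset.range b :=
    fun j _ => Finset.mem_range.mpr (Nat.mod_lt _ hb)
  have hinv : ∀ j ∈ Finset.range b, (b - (b - j) % b) % b = j := by
    intro j hj
    simp only [Finset.mem_range] at hj
    rcases Nat.eq_zero_or_pos j with h | h
    · subst h; simp [Nat.mod_self]
    · rw [Nat.mod_eq_of_lt (by omega : b - j < b), show b - (b-j) = j by omega,
        Nat.mod_eq_of_lt hj]
  exact Finset.sum_nbij' (fun j => (b - j) % b) (fun j => (b - j) % b)
    hmem hmem hinv hinv (fun j _ => rfl)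

lemma Ccop (a b : ℕ) (ha : 0 < a) (hb : 0 < b) (hab : Nat.Coprime a b) :
    ∫ x in (0:ℝ)..1, BB (a*x) * BB (b*x) = 1/(12*(a:ℝ)*(b:ℝ)) := by
  have ha' : (0:ℝ) < a := by exact_mod_cast ha
  have hb' : (0:ℝ) < b := by exact_mod_cast hb
  have s1 : ∫ x in (0:ℝ)..1, BB (a*x) * BB (b*x)
      = ∑ j ∈ Finset.range b, ∫ x in (0:ℝ)..1, BB ((a:ℝ)*x) * BB (x + (j:ℝ)/b) := by
    rw [← intervalIntegral.integral_finset_sum]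
    · apply intervalIntegral.integral_congr
      intro x _
      simp only
      rw [← BB_mult b hb x, Finset.mul_sum]
    · intro j _
      simpa using II a 1 0 ((j:ℝ)/b) 0 1
  -- step 2: shift
  have s2 : ∀ j : ℕ, ∫ x in (0:ℝ)..1, BB ((a:ℝ)*x) * BB (x + (j:ℝ)/b)
      = ∫ y in (0:ℝ)..1, BB ((a:ℝ)*y - (a:ℝ)*(j:ℝ)/b) * BB y := by
    intro j
    set F : ℝ → ℝ := fun y => BB ((a:ℝ)*y - (a:ℝ)*(j:ℝ)/b) * BB y with hF
    have hFper : Function.Periodic F 1 := by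
      intro y
      simp only [hF]
      have h1 : (a:ℝ)*(y+1) - (a:ℝ)*(j:ℝ)/b = ((a:ℝ)*y - (a:ℝ)*(j:ℝ)/b) + ((a:ℤ):ℝ) := by
        push_cast; ring
      rw [h1, BB_int_per, BB_per y]
    have hcomp : ∀ x : ℝ, BB ((a:ℝ)*x) * BB (x + (j:ℝ)/b) = F (x + (j:ℝ)/b) := by
      intro x
      simp only [hF]
      congr 2
      ring
    rw [intervalIntegral.integral_congr (g := fun x => F (x + (j:ℝ)/b)) (fun x _ => hcomp x)]
    rw [intervalIntegral.integral_comp_add_right F ((j:ℝ)/b), zero_add, add_comm 1 ((j:ℝ)/b)]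
    rw [hFper.intervalIntegral_add_eq ((j:ℝ)/b) 0, zero_add]
  -- step 3: shift argument mod 1
  have s3 : ∀ j : ℕ, ∫ y in (0:ℝ)..1, BB ((a:ℝ)*y - (a:ℝ)*(j:ℝ)/b) * BB y
      = ∫ y in (0:ℝ)..1, BB ((a:ℝ)*y + (((b - (a*j) % b) % b : ℕ) :ℝ)/b) * BB y := by
    intro j
    set r : ℕ := (b - (a*j) % b) % b with hr
    have hdvd : ∃ M : ℕ, a*j + r = b*M := by
      rcases Nat.eq_zero_or_pos ((a*j) % b) with h0 | h0
      · refine ⟨(a*j)/b, ?_⟩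
        have := Nat.div_add_mod (a*j) b
        simp only [hr, h0, Nat.sub_zero, Nat.mod_self]
        omega
      · refine ⟨(a*j)/b + 1, ?_⟩
        have h1 := Nat.div_add_mod (a*j) b
        have h2 : (a*j) % b < b := Nat.mod_lt _ hb
        have h3 : r = b - (a*j) % b := by
          rw [hr]; exact Nat.mod_eq_of_lt (by omega)
        have h4 : b*((a*j)/b + 1) = b*((a*j)/b) + b := by ring
        omega
    obtain ⟨M, hM⟩ := hdvd
    have harg : ∀ y : ℝ, (a:ℝ)*y - (a:ℝ)*(j:ℝ)/b = ((a:ℝ)*y + (r:ℝ)/b) + ((-(M:ℤ) : ℤ):ℝ) := by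
      intro y
      have : ((a:ℝ)*(j:ℝ) + r) = (b:ℝ)*(M:ℝ) := by exact_mod_cast hM
      field_simp
      push_cast
      linarith [this]
    apply intervalIntegral.integral_congr
    intro y _
    simp only
    rw [harg y, BB_int_per]
  rw [s1, Finset.sum_congr rfl (fun j _ => (s2 j).trans (s3 j))]
  -- step 4: reindex
  have s4 : ∑ j ∈ Finset.range b,
        ∫ y in (0:ℝ)..1, BB ((a:ℝ)*y + (((b - (a*j) % b) % b : ℕ) :ℝ)/b) * BB y
      = ∑ j ∈ Finset.range b, ∫ y in (0:ℝ)..1, BB ((a:ℝ)*y + (j:ℝ)/b) * BB y := by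
    have e1 := sumA a b hb hab
      (fun t => ∫ y in (0:ℝ)..1, BB ((a:ℝ)*y + (((b - t) % b : ℕ) :ℝ)/b) * BB y)
    have e2 := sumB b hb (fun t => ∫ y in (0:ℝ)..1, BB ((a:ℝ)*y + (t:ℝ)/b) * BB y)
    exact e1.trans e2
  rw [s4]
  -- step 5: recombine
  rw [← intervalIntegral.integral_finset_sum (fun j _ => by
    simpa using II a 1 ((j:ℝ)/b) 0 0 1)]
  have s5 : ∫ y in (0:ℝ)..1, ∑ j ∈ Finset.range b, BB ((a:ℝ)*y + (j:ℝ)/b) * BB y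
      = ∫ y in (0:ℝ)..1, BB (((a*b : ℕ):ℝ)*y) * BB y := by
    apply intervalIntegral.integral_congr
    intro y _
    simp only
    have hbm := BB_mult b hb ((a:ℝ)*y)
    rw [← Finset.sum_mul, hbm]
    have : (b:ℝ)*((a:ℝ)*y) = ((a*b : ℕ):ℝ)*y := by push_cast; ring
    rw [this]
  rw [s5, C1 (a*b) (Nat.mul_pos ha hb)]
  push_cast
  ring

lemma II3 {u v : ℝ} (s : Finset ℕ) (g : ℕ → ℝ → ℝ)
    (h : ∀ i ∈ s, IntervalIntegrable (g i) volume u v) :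
    IntervalIntegrable (fun x => ∑ i ∈ s, g i x) volume u v :=
  ⟨MeasureTheory.integrable_finset_sum s fun i hi => (h i hi).1,
   MeasureTheory.integrable_finset_sum s fun i hi => (h i hi).2⟩

lemma Cgen (a b : ℕ) (ha : 0 < a) (hb : 0 < b) :
    ∫ x in (0:ℝ)..1, BB (a*x) * BB (b*x)
      = (Nat.gcd a b : ℝ)^2 / (12*(a:ℝ)*(b:ℝ)) := by
  have ha' : (0:ℝ) < a := by exact_mod_cast ha
  have hb' : (0:ℝ) < b := by exact_mod_cast hb
  set d := Nat.gcd a b with hd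
  have hdpos : 0 < d := Nat.gcd_pos_of_pos_left _ ha
  have hd' : (0:ℝ) < d := by exact_mod_cast hdpos
  set a1 := a / d with ha1d
  set b1 := b / d with hb1d
  have ha1 : a = d * a1 := (Nat.mul_div_cancel' (Nat.gcd_dvd_left a b)).symm
  have hb1 : b = d * b1 := (Nat.mul_div_cancel' (Nat.gcd_dvd_right a b)).symm
  have hcop : Nat.Coprime a1 b1 := Nat.coprime_div_gcd_div_gcd hdpos
  have ha1pos : 0 < a1 := by
    rcases Nat.eq_zero_or_pos a1 with h | h
    · rw [h, Nat.mul_zero] at ha1; omega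
    · exact h
  have hb1pos : 0 < b1 := by
    rcases Nat.eq_zero_or_pos b1 with h | h
    · rw [h, Nat.mul_zero] at hb1; omega
    · exact h
  set g : ℝ → ℝ := fun x => BB (a1*x) * BB (b1*x) with hg
  have hgper : Function.Periodic g 1 := by
    intro y
    simp only [hg]
    rw [show (a1:ℝ)*(y+1) = (a1:ℝ)*y + ((a1:ℤ):ℝ) by push_cast; ring, BB_int_per,
        show (b1:ℝ)*(y+1) = (b1:ℝ)*y + ((b1:ℤ):ℝ) by push_cast; ring, BB_int_per]
  have hcomp : ∀ x:ℝ, BB ((a:ℝ)*x) * BB ((b:ℝ)*x) = g ((d:ℝ)*x) := by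
    intro x
    simp only [hg]
    rw [show (a1:ℝ)*((d:ℝ)*x) = ((d*a1 : ℕ):ℝ)*x by push_cast; ring,
        show (b1:ℝ)*((d:ℝ)*x) = ((d*b1 : ℕ):ℝ)*x by push_cast; ring, ← ha1, ← hb1]
  have key : ∫ x in (0:ℝ)..1, BB (a*x) * BB (b*x) = ∫ x in (0:ℝ)..1, g x := by
    rw [intervalIntegral.integral_congr (g := fun x => g ((d:ℝ)*x)) (fun x _ => hcomp x)]
    rw [intervalIntegral.integral_comp_mul_left g hd'.ne']
    have hz := hgper.intervalIntegral_add_zsmul_eq (d:ℤ) 0 (fun t1 t2 => II2 a1 b1 t1 t2)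
    simp only [zero_add, zsmul_eq_mul, smul_eq_mul] at hz ⊢
    rw [mul_zero, mul_one]
    have : ((d:ℤ):ℝ) * (1:ℝ) = (d:ℝ) := by push_cast; ring
    rw [this] at hz
    rw [hz]
    push_cast
    field_simp
  rw [key]
  have hcc := Ccop a1 b1 ha1pos hb1pos hcop
  simp only [hg]
  rw [hcc]
  have haa : (a:ℝ) = (d:ℝ) * (a1:ℝ) := by exact_mod_cast congrArg (Nat.cast : ℕ → ℝ) ha1
  have hbb : (b:ℝ) = (d:ℝ) * (b1:ℝ) := by exact_mod_cast congrArg (Nat.cast : ℕ → ℝ) hb1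
  rw [haa, hbb]
  have ha1' : (0:ℝ) < a1 := by exact_mod_cast ha1pos
  have hb1' : (0:ℝ) < b1 := by exact_mod_cast hb1pos
  field_simp

theorem stmt_5 (n : ℕ → ℕ) (hpos : ∀ k, 0 < n k) (hinj : Function.Injective n)
    (N : ℕ) (hN : 1 ≤ N) :
    ∫ x in (0:ℝ)..1, (∑ k ∈ Finset.Icc 1 N, (Int.fract ((n k : ℝ) * x) - 1/2)) ^ 2
      = (1/12) * ∑ k ∈ Finset.Icc 1 N, ∑ l ∈ Finset.Icc 1 N,
          (Nat.gcd (n k) (n l) : ℝ) ^ 2 / ((n k : ℝ) * (n l : ℝ)) := by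
  have hBB : ∀ y : ℝ, Int.fract y - 1/2 = BB y := fun y => rfl
  simp only [hBB]
  have expand : ∀ x:ℝ, (∑ k ∈ Finset.Icc 1 N, BB ((n k:ℝ)*x))^2
      = ∑ k ∈ Finset.Icc 1 N, ∑ l ∈ Finset.Icc 1 N, BB ((n k:ℝ)*x) * BB ((n l:ℝ)*x) := by
    intro x; rw [sq, Finset.sum_mul_sum]
  rw [intervalIntegral.integral_congr (fun x _ => expand x)]
  rw [intervalIntegral.integral_finset_sum (fun k _ =>
    II3 _ _ (fun l _ => II2 ((n k : ℕ):ℝ) ((n l : ℕ):ℝ) 0 1))]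
  rw [Finset.sum_congr rfl (fun k _ => intervalIntegral.integral_finset_sum
    (fun l _ => II2 ((n k : ℕ):ℝ) ((n l : ℕ):ℝ) 0 1))]
  rw [Finset.sum_congr rfl (fun k _ => Finset.sum_congr rfl
    (fun l _ => Cgen (n k) (n l) (hpos k) (hpos l)))]
  rw [Finset.mul_sum]
  refine Finset.sum_congr rfl (fun k _ => ?_)
  rw [Finset.mul_sum]
  refine Finset.sum_congr rfl (fun l _ => ?_)
  have h1 : ((n k : ℕ):ℝ) ≠ 0 := by exact_mod_cast (hpos k).ne'
  have h2 : ((n l : ℕ):ℝ) ≠ 0 := by exact_mod_cast (hpos l).ne'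
  ring
end

section
/- Let (X_n) be a sequence of real random variables on a probability space, and suppose there exist random variables X and Y with Y > 0 a.s. such that for every subsequence (X_{n_k}) the normalized sums (∑_{k=1}^N (X_{n_k} − X))/(Y√N) converge in distribution to the standard normal. Then the sequence (X_n) is bounded in probability, i.e., lim_{K→∞} sup_n P(|X_n| > K) = 0. -/
open MeasureTheory ProbabilityTheory Filter Topology ENNReal

section Helpers

variable {Ω : Type*} [MeasurableSpace Ω] (P : Measure Ω) [IsProbabilityMeasure P]

lemma tail_mono' (g : Ω → ℝ) {C C' : ℝ} (h : C ≤ C') :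
    (P {ω | C' < |g ω|}).toReal ≤ (P {ω | C < |g ω|}).toReal :=
  ENNReal.toReal_mono (measure_ne_top P _)
    (measure_mono fun _ hω => lt_of_le_of_lt h hω)

lemma tail_small (g : Ω → ℝ) (hg : Measurable g) {δ : ℝ} (hδ : 0 < δ) :
    ∃ C : ℝ, 0 < C ∧ (P {ω | C < |g ω|}).toReal ≤ δ := by
  have hmeas : ∀ k : ℕ, NullMeasurableSet {ω | (k : ℝ) < |g ω|} P := fun k =>
    (measurableSet_lt measurable_const hg.abs).nullMeasurableSet
  have hanti : Antitone fun k : ℕ => {ω | (k : ℝ) < |g ω|} := fun a b hab =>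
    Set.setOf_subset_setOf.2 fun ω hω => lt_of_le_of_lt (Nat.cast_le.2 hab) hω
  have h0 := tendsto_measure_iInter_atTop hmeas hanti ⟨0, measure_ne_top P _⟩
  have hiInter : (⋂ k : ℕ, {ω | (k : ℝ) < |g ω|}) = ∅ := by
    refine Set.eq_empty_iff_forall_notMem.2 fun ω hω => ?_
    obtain ⟨k, hk⟩ := exists_nat_gt |g ω|
    exact absurd (Set.mem_iInter.1 hω k) (not_lt.2 hk.le)
  rw [hiInter, measure_empty] at h0
  have hev := h0.eventually_lt_const (show (0 : ℝ≥0∞) < ENNReal.ofReal δ by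
    simpa using hδ)
  obtain ⟨k, hk⟩ := hev.exists
  refine ⟨(k : ℝ) + 1, by positivity, ?_⟩
  refine le_trans (tail_mono' P g (le_of_lt (lt_add_one _))) ?_
  exact ENNReal.toReal_le_of_le_ofReal hδ.le hk.le

lemma gauss_pick {δ : ℝ} (hδ : 0 < δ) :
    ∃ t : ℝ, 0 < t ∧ 1 - δ < ((gaussianReal 0 1) (Set.Iio t)).toReal ∧
      ((gaussianReal 0 1) (Set.Iio (-t))).toReal < δ := by
  set μ : Measure ℝ := gaussianReal 0 1 with hμ
  have hfin : ∀ s : Set ℝ, μ s ≠ ⊤ := fun s => measure_ne_top μ s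
  have h1 : Tendsto (fun t : ℝ => (μ (Set.Iio t)).toReal) atTop (𝓝 1) := by
    have h := tendsto_measure_iUnion_atTop (μ := μ) (s := fun t : ℝ => Set.Iio t)
      (fun a b hab => Set.Iio_subset_Iio hab)
    rw [Set.iUnion_Iio, measure_univ] at h
    have := (ENNReal.tendsto_toReal (by simp : (1 : ℝ≥0∞) ≠ ⊤)).comp h
    exact this
  have h0 : Tendsto (fun t : ℝ => (μ (Set.Iio t)).toReal) atBot (𝓝 0) := by
    have hm : ∀ t : ℝ, NullMeasurableSet (Set.Iio t) μ :=
      fun t => measurableSet_Iio.nullMeasurableSet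
    have h := tendsto_measure_iInter_atBot hm
      (fun a b hab => Set.Iio_subset_Iio hab) ⟨0, hfin _⟩
    have hI : (⋂ t : ℝ, Set.Iio t) = ∅ := by
      refine Set.eq_empty_iff_forall_notMem.2 fun x hx => ?_
      exact absurd (Set.mem_iInter.1 hx x) (lt_irrefl x)
    rw [hI, measure_empty] at h
    have := (ENNReal.tendsto_toReal (by simp : (0 : ℝ≥0∞) ≠ ⊤)).comp h
    exact this
  obtain ⟨t₁, ht₁⟩ := (h1.eventually_const_lt (show 1 - δ < 1 by linarith)).exists
  obtain ⟨t₂, ht₂⟩ := ((h0.eventually_lt_const hδ).and (eventually_le_atBot (0:ℝ))).exists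
  refine ⟨max 1 (max t₁ (-t₂)), lt_of_lt_of_le one_pos (le_max_left _ _), ?_, ?_⟩
  · refine lt_of_lt_of_le ht₁ (ENNReal.toReal_mono (hfin _) (measure_mono (Set.Iio_subset_Iio ?_)))
    exact le_max_of_le_right (le_max_left _ _)
  · refine lt_of_le_of_lt (ENNReal.toReal_mono (hfin _) (measure_mono (Set.Iio_subset_Iio ?_))) ht₂.1
    have : -t₂ ≤ max 1 (max t₁ (-t₂)) := le_max_of_le_right (le_max_right _ _)
    linarith

end Helpers

theorem stmt_9 {Ω : Type*} [MeasurableSpace Ω] (P : Measure Ω) [IsProbabilityMeasure P]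
    (X : ℕ → Ω → ℝ) (hX : ∀ n, Measurable (X n))
    (X₀ Y : Ω → ℝ) (hX₀ : Measurable X₀) (hY : Measurable Y)
    (hYpos : ∀ᵐ ω ∂P, 0 < Y ω)
    (hCLT : ∀ n : ℕ → ℕ, StrictMono n → ∀ t : ℝ,
      Tendsto (fun N : ℕ =>
          (P {ω | (∑ k ∈ Finset.Icc 1 N, (X (n k) ω - X₀ ω)) / (Y ω * Real.sqrt N) < t}).toReal)
        atTop (nhds ((gaussianReal 0 1 (Set.Iio t)).toReal))) :
    Tendsto (fun K : ℕ => ⨆ n : ℕ, (P {ω | (K : ℝ) < |X n ω|}).toReal)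
      atTop (nhds 0) := by
  have key : ∀ ε : ℝ, 0 < ε → ∃ K : ℕ, ∀ n : ℕ,
      (P {ω | (K : ℝ) < |X n ω|}).toReal ≤ ε := by
    intro ε hε
    by_contra hcon
    push_neg at hcon
    -- Step (a): find witnesses with arbitrarily large index
    have hwit : ∀ b L : ℕ, ∃ n : ℕ, b ≤ n ∧ ε < (P {ω | (L : ℝ) < |X n ω|}).toReal := by
      intro b L
      have hfin : ∃ K : ℕ, ∀ i < b, (P {ω | (K : ℝ) < |X i ω|}).toReal ≤ ε := by
        induction b with
        | zero => exact ⟨0, fun i hi => absurd hi (Nat.not_lt_zero i)⟩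
        | succ b ih =>
          obtain ⟨K, hK⟩ := ih
          obtain ⟨C, hC0, hC⟩ := tail_small P (X b) (hX b) hε
          obtain ⟨K', hK'⟩ := exists_nat_gt (max (K : ℝ) C)
          refine ⟨K', fun i hi => ?_⟩
          rcases Nat.lt_succ_iff_lt_or_eq.1 hi with h | h
          · exact le_trans (tail_mono' P (X i) (le_trans (le_max_left _ _) hK'.le)) (hK i h)
          · subst h
            exact le_trans (tail_mono' P (X i) (le_trans (le_max_right _ _) hK'.le)) hC
      obtain ⟨K, hK⟩ := hfin
      obtain ⟨n, hn⟩ := hcon (max K L)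
      refine ⟨n, ?_, lt_of_lt_of_le hn (tail_mono' P (X n)
        (by exact_mod_cast le_max_right K L))⟩
      by_contra hnb
      push_neg at hnb
      have h1 := hK n hnb
      have h2 : (P {ω | ((max K L : ℕ) : ℝ) < |X n ω|}).toReal ≤
          (P {ω | (K : ℝ) < |X n ω|}).toReal :=
        tail_mono' P (X n) (by exact_mod_cast le_max_left K L)
      linarith
    -- Step (b): build the strictly monotone subsequence
    choose f hf1 hf2 using hwit
    set m : ℕ → ℕ := fun j => Nat.rec (f 0 0) (fun j mj => f (mj + 1) (j + 1)) j with hm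
    have hmsucc : ∀ j, m (j + 1) = f (m j + 1) (j + 1) := fun j => rfl
    have hmono : StrictMono m := strictMono_nat_of_lt_succ fun j => by
      rw [hmsucc]
      exact lt_of_lt_of_le (Nat.lt_succ_self _) (hf1 _ _)
    have hmtail : ∀ j : ℕ, ε < (P {ω | (j : ℝ) < |X (m j) ω|}).toReal := by
      intro j
      cases j with
      | zero => exact hf2 0 0
      | succ j => rw [hmsucc]; exact hf2 (m j + 1) (j + 1)
    -- Step (c): normalized sums
    set S : ℕ → Ω → ℝ := fun N ω => ∑ k ∈ Finset.Icc 1 N, (X (m k) ω - X₀ ω) with hS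
    set U : ℕ → Ω → ℝ := fun N ω => S N ω / (Y ω * Real.sqrt N) with hUdef
    have hUmeas : ∀ N, Measurable (U N) := fun N =>
      (Finset.measurable_sum _ fun k _ => (hX (m k)).sub hX₀).div (hY.mul measurable_const)
    have hCm : ∀ t : ℝ, Tendsto (fun N : ℕ => (P {ω | U N ω < t}).toReal) atTop
        (𝓝 ((gaussianReal 0 1 (Set.Iio t)).toReal)) := fun t => hCLT m hmono t
    -- Step (d): tightness of the normalized sums
    have tight : ∀ δ : ℝ, 0 < δ → ∃ C : ℝ, 0 < C ∧ ∀ N : ℕ,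
        (P {ω | C < |U N ω|}).toReal ≤ δ := by
      intro δ hδ
      obtain ⟨t, ht0, ht1, ht2⟩ := gauss_pick (show 0 < δ / 4 by linarith)
      have h1 := (hCm t).eventually_const_lt
        (show 1 - δ / 2 < (gaussianReal 0 1 (Set.Iio t)).toReal by linarith)
      have h2 := (hCm (-t)).eventually_lt_const
        (show (gaussianReal 0 1 (Set.Iio (-t))).toReal < δ / 2 by linarith)
      obtain ⟨N₀, hN₀⟩ := eventually_atTop.1 (h1.and h2)
      have hfin : ∀ M : ℕ, ∃ C : ℝ, 0 < C ∧ ∀ N < M,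
          (P {ω | C < |U N ω|}).toReal ≤ δ := by
        intro M
        induction M with
        | zero => exact ⟨1, one_pos, fun N hN => absurd hN (Nat.not_lt_zero N)⟩
        | succ M ih =>
          obtain ⟨C, hC0, hC⟩ := ih
          obtain ⟨C', hC'0, hC'⟩ := tail_small P (U M) (hUmeas M) hδ
          refine ⟨max C C', lt_of_lt_of_le hC0 (le_max_left _ _), fun N hN => ?_⟩
          rcases Nat.lt_succ_iff_lt_or_eq.1 hN with h | h
          · exact le_trans (tail_mono' P (U N) (le_max_left _ _)) (hC N h)
          · subst h
            exact le_trans (tail_mono' P (U N) (le_max_right _ _)) hC'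
      obtain ⟨C₁, hC₁0, hC₁⟩ := hfin N₀
      refine ⟨max t C₁, lt_of_lt_of_le ht0 (le_max_left _ _), fun N => ?_⟩
      rcases lt_or_ge N N₀ with h | h
      · exact le_trans (tail_mono' P (U N) (le_max_right _ _)) (hC₁ N h)
      · refine le_trans (tail_mono' P (U N) (le_max_left _ _)) ?_
        obtain ⟨hA, hB⟩ := hN₀ N h
        have hsub : {ω | t < |U N ω|} ⊆ {ω | U N ω < -t} ∪ {ω | U N ω < t}ᶜ := by
          intro ω hω
          have hω' : t < |U N ω| := hω
          rcases lt_abs.1 hω' with h' | h'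
          · exact Or.inr (fun hc => absurd h' (not_lt.2 (le_of_lt hc)))
          · exact Or.inl (lt_neg.1 h')
        have hmeasB : MeasurableSet {ω | U N ω < t} :=
          measurableSet_lt (hUmeas N) measurable_const
        have hle2 := le_trans (measure_mono (μ := P) hsub) (measure_union_le (μ := P) _ _)
        have h1' : (P {ω | t < |U N ω|}).toReal ≤
            (P {ω | U N ω < -t}).toReal + (P ({ω | U N ω < t}ᶜ)).toReal := by
          rw [← ENNReal.toReal_add (measure_ne_top P _) (measure_ne_top P _)]
          exact ENNReal.toReal_mono
            (ENNReal.add_ne_top.2 ⟨measure_ne_top P _, measure_ne_top P _⟩) hle2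
        have hcompl : (P ({ω | U N ω < t}ᶜ)).toReal = 1 - (P {ω | U N ω < t}).toReal := by
          rw [prob_compl_eq_one_sub hmeasB,
            ENNReal.toReal_sub_of_le prob_le_one (by simp), ENNReal.toReal_one]
        rw [hcompl] at h1'
        linarith
    -- Step (e): final contradiction
    obtain ⟨C, hC0, hC⟩ := tight (ε / 4) (by linarith)
    obtain ⟨D, hD0, hD⟩ := tail_small P X₀ hX₀ (show 0 < ε / 4 by linarith)
    obtain ⟨B, hB0, hB⟩ := tail_small P Y hY (show 0 < ε / 4 by linarith)
    set M : ℕ := ⌈2 * D⌉₊ + ⌈16 * C ^ 2 * B ^ 2⌉₊ + 1 with hMdef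
    set Q : ℕ := M + 1 with hQdef
    have hQ2D : 2 * D ≤ (Q : ℝ) := by
      have := Nat.le_ceil (2 * D)
      have hle : (⌈2 * D⌉₊ : ℝ) ≤ (Q : ℝ) := by
        have : ⌈2 * D⌉₊ ≤ Q := by omega
        exact_mod_cast this
      linarith
    have hQCB : 16 * C ^ 2 * B ^ 2 < (Q : ℝ) := by
      have := Nat.le_ceil (16 * C ^ 2 * B ^ 2)
      have hlt : (⌈16 * C ^ 2 * B ^ 2⌉₊ : ℝ) < (Q : ℝ) := by
        have : ⌈16 * C ^ 2 * B ^ 2⌉₊ < Q := by omega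
        exact_mod_cast this
      linarith
    have hsqQ : 4 * C * B < Real.sqrt Q := by
      rw [show (16 : ℝ) * C ^ 2 * B ^ 2 = (4 * C * B) ^ 2 by ring] at hQCB
      have := Real.sqrt_lt_sqrt (by positivity) hQCB
      rwa [Real.sqrt_sq (by positivity)] at this
    have hQpos : (0 : ℝ) < (Q : ℝ) := by positivity
    have hMpos : (0 : ℝ) < (M : ℝ) := by
      have : 0 < M := by omega
      exact_mod_cast this
    have hsqQpos : 0 < Real.sqrt Q := Real.sqrt_pos.2 hQpos
    have hsqMpos : 0 < Real.sqrt M := Real.sqrt_pos.2 hMpos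
    set A : Set Ω := {ω | D < |X₀ ω|} ∪ {ω | B < |Y ω|} ∪ {ω | C < |U Q ω|} ∪ {ω | C < |U M ω|}
      with hA
    have hsub : ({ω | (Q : ℝ) < |X (m Q) ω|} : Set Ω) ≤ᵐ[P] A := by
      refine hYpos.mono fun ω hy => ?_
      intro hE
      show ω ∈ ({ω | D < |X₀ ω|} : Set Ω) ∪ {ω | B < |Y ω|} ∪ {ω | C < |U Q ω|} ∪ {ω | C < |U M ω|}
      simp only [Set.mem_union, Set.mem_setOf_eq]
      by_contra hnot
      push_neg at hnot
      obtain ⟨⟨⟨h1, h2⟩, h3⟩, h4⟩ := hnot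
      have hE' : (Q : ℝ) < |X (m Q) ω| := hE
      have hyB : Y ω ≤ B := le_trans (le_abs_self _) h2
      have hsplit : S Q ω = S M ω + (X (m Q) ω - X₀ ω) :=
        Finset.sum_Icc_succ_top (by omega : 1 ≤ M + 1) fun k => X (m k) ω - X₀ ω
      have hUQ : |S Q ω| ≤ C * (Y ω * Real.sqrt Q) := by
        have h3' : |S Q ω / (Y ω * Real.sqrt Q)| ≤ C := h3
        have hpos : 0 < Y ω * Real.sqrt Q := by positivity
        rw [abs_div, abs_of_pos hpos, div_le_iff₀ hpos] at h3'
        exact h3'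
      have hUM : |S M ω| ≤ C * (Y ω * Real.sqrt M) := by
        have h4' : |S M ω / (Y ω * Real.sqrt M)| ≤ C := h4
        have hpos : 0 < Y ω * Real.sqrt M := by positivity
        rw [abs_div, abs_of_pos hpos, div_le_iff₀ hpos] at h4'
        exact h4'
      have hsqMQ : Real.sqrt M ≤ Real.sqrt Q := by
        apply Real.sqrt_le_sqrt
        exact_mod_cast Nat.le_succ M
      have habs : |X (m Q) ω - X₀ ω| ≤ 2 * C * (B * Real.sqrt Q) := by
        have heq : X (m Q) ω - X₀ ω = S Q ω - S M ω := by rw [hsplit]; ring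
        rw [heq]
        calc |S Q ω - S M ω| ≤ |S Q ω| + |S M ω| := abs_sub _ _
        _ ≤ C * (Y ω * Real.sqrt Q) + C * (Y ω * Real.sqrt M) := add_le_add hUQ hUM
        _ ≤ 2 * C * (B * Real.sqrt Q) := by
          have k1 : Y ω * Real.sqrt M ≤ B * Real.sqrt Q :=
            mul_le_mul hyB hsqMQ hsqMpos.le hB0.le
          have k2 : Y ω * Real.sqrt Q ≤ B * Real.sqrt Q :=
            mul_le_mul_of_nonneg_right hyB hsqQpos.le
          have k3 := mul_le_mul_of_nonneg_left k1 hC0.le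
          have k4 := mul_le_mul_of_nonneg_left k2 hC0.le
          linarith
      have hlow : (Q : ℝ) - D ≤ |X (m Q) ω - X₀ ω| := by
        have h5 := abs_sub_abs_le_abs_sub (X (m Q) ω) (X₀ ω)
        linarith
      nlinarith [Real.mul_self_sqrt hQpos.le, mul_lt_mul_of_pos_right hsqQ hsqQpos]
    have hPle : P A
        ≤ P {ω | D < |X₀ ω|} + P {ω | B < |Y ω|} + P {ω | C < |U Q ω|} + P {ω | C < |U M ω|} := by
      rw [hA]
      calc P ({ω | D < |X₀ ω|} ∪ {ω | B < |Y ω|} ∪ {ω | C < |U Q ω|} ∪ {ω | C < |U M ω|})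
          ≤ P ({ω | D < |X₀ ω|} ∪ {ω | B < |Y ω|} ∪ {ω | C < |U Q ω|}) + P {ω | C < |U M ω|} :=
        measure_union_le _ _
        _ ≤ (P ({ω | D < |X₀ ω|} ∪ {ω | B < |Y ω|}) + P {ω | C < |U Q ω|}) + P {ω | C < |U M ω|} := by
          gcongr
          exact measure_union_le _ _
        _ ≤ ((P {ω | D < |X₀ ω|} + P {ω | B < |Y ω|}) + P {ω | C < |U Q ω|}) + P {ω | C < |U M ω|} := by
          gcongr
          exact measure_union_le _ _
    have hEQ := le_trans (measure_mono_ae hsub) hPle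
    have htR : (P {ω | (Q : ℝ) < |X (m Q) ω|}).toReal ≤
        (P {ω | D < |X₀ ω|}).toReal + (P {ω | B < |Y ω|}).toReal +
        (P {ω | C < |U Q ω|}).toReal + (P {ω | C < |U M ω|}).toReal := by
      rw [← ENNReal.toReal_add (measure_ne_top P _) (measure_ne_top P _),
        ← ENNReal.toReal_add (by finiteness) (measure_ne_top P _),
        ← ENNReal.toReal_add (by finiteness) (measure_ne_top P _)]
      exact ENNReal.toReal_mono (by finiteness) hEQ
    have hQtail := hmtail Q
    have h3' := hC Q
    have h4' := hC M
    linarith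
  -- Step 2: conclude from the uniform tail bound
  rw [Metric.tendsto_atTop]
  intro ε hε
  obtain ⟨K₀, hK₀⟩ := key (ε / 2) (by linarith)
  refine ⟨K₀, fun K hK => ?_⟩
  have hsup_le : (⨆ n, (P {ω | (K : ℝ) < |X n ω|}).toReal) ≤ ε / 2 :=
    Real.iSup_le (fun n => le_trans (tail_mono' P (X n) (by exact_mod_cast hK)) (hK₀ n))
      (by linarith)
  have hsup_nonneg : 0 ≤ ⨆ n, (P {ω | (K : ℝ) < |X n ω|}).toReal :=
    Real.iSup_nonneg fun n => ENNReal.toReal_nonneg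
  rw [Real.dist_eq, sub_zero, abs_of_nonneg hsup_nonneg]
  linarith
end

section
/- Let (X_n) be a sequence of random variables and let X, Y, X*, Y* be random variables with Y > 0 and Y* > 0 a.s. Suppose that for every event A with P(A) > 0, the conditional distributions of (∑_{k=1}^N (X_k − X))/(Y√N) given A converge to the standard normal, and the same holds with X, Y replaced by X*, Y*. Then X = X* a.s. and Y = Y* a.s. -/
open MeasureTheory ProbabilityTheory Filter

lemma gauss_iio_strict_mono {s t : ℝ} (hst : s < t) :
    ((gaussianReal 0 1 (Set.Iio s)).toReal) < ((gaussianReal 0 1 (Set.Iio t)).toReal) := by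
  have h1 : (1 : NNReal) ≠ 0 := one_ne_zero
  have habs := gaussianReal_absolutelyContinuous' (0 : ℝ) h1
  have hIco : gaussianReal 0 1 (Set.Ico s t) ≠ 0 := by
    intro h
    have hv : (volume : Measure ℝ) (Set.Ico s t) = 0 := habs h
    rw [Real.volume_Ico] at hv
    simp only [ENNReal.ofReal_eq_zero] at hv
    linarith
  have hunion : gaussianReal 0 1 (Set.Iio t)
      = gaussianReal 0 1 (Set.Iio s) + gaussianReal 0 1 (Set.Ico s t) := by
    rw [← Set.Iio_union_Ico_eq_Iio hst.le,
      measure_union (by intro u hu1 hu2 x hx; exact absurd ((hu2 hx).1) (not_le.mpr (hu1 hx)))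
        measurableSet_Ico]
  have hlt : gaussianReal 0 1 (Set.Iio s) < gaussianReal 0 1 (Set.Iio t) := by
    rw [hunion]
    exact ENNReal.lt_add_right (measure_ne_top _ _) hIco
  exact ENNReal.toReal_lt_toReal (measure_ne_top _ _) (measure_ne_top _ _) |>.mpr hlt

lemma cond_mono_ae {Ω : Type*} [MeasurableSpace Ω] (P : Measure Ω) {A : Set Ω}
    (hA : MeasurableSet A) {S T : Set Ω}
    (h : ∀ᵐ ω ∂P, ω ∈ A ∩ T → ω ∈ A ∩ S) :
    (P[|A]) T ≤ (P[|A]) S := by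
  rw [cond_apply hA, cond_apply hA]
  exact mul_le_mul_right (measure_mono_ae h) _

lemma main_contra {Ω : Type*} [MeasurableSpace Ω] (P : Measure Ω) [IsProbabilityMeasure P]
    {A : Set Ω} (hA : MeasurableSet A) (hApos : 0 < P A)
    (F G : ℕ → Ω → ℝ) (s t : ℝ) (hst : s < t)
    (hF : Tendsto (fun N : ℕ => ((P[|A]) {ω | F N ω < t}).toReal) atTop
      (nhds ((gaussianReal 0 1 (Set.Iio t)).toReal)))
    (hG : Tendsto (fun N : ℕ => ((P[|A]) {ω | G N ω < s}).toReal) atTop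
      (nhds ((gaussianReal 0 1 (Set.Iio s)).toReal)))
    (h : ∀ᶠ N in atTop, ∀ᵐ ω ∂P, ω ∈ A → F N ω < t → G N ω < s) : False := by
  haveI : IsProbabilityMeasure (P[|A]) := cond_isProbabilityMeasure hApos.ne'
  have hle : ∀ᶠ N in atTop, ((P[|A]) {ω | F N ω < t}).toReal ≤
      ((P[|A]) {ω | G N ω < s}).toReal := by
    filter_upwards [h] with N hN
    refine ENNReal.toReal_mono (measure_ne_top _ _) ?_
    refine cond_mono_ae P hA ?_
    filter_upwards [hN] with ω hω hmem
    exact ⟨hmem.1, hω hmem.1 hmem.2⟩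
  have := le_of_tendsto_of_tendsto hF hG hle
  exact absurd this (not_le.mpr (gauss_iio_strict_mono hst))

lemma sum_center_eq {Ω : Type*} (X : ℕ → Ω → ℝ) (X₀ X₀' : Ω → ℝ) (N : ℕ) (ω : Ω) :
    (∑ k ∈ Finset.Icc 1 N, (X k ω - X₀ ω))
      = (∑ k ∈ Finset.Icc 1 N, (X k ω - X₀' ω)) - N * (X₀ ω - X₀' ω) := by
  rw [Finset.sum_sub_distrib, Finset.sum_sub_distrib, Finset.sum_const, Finset.sum_const,
    Nat.card_Icc]
  simp only [Nat.add_sub_cancel, nsmul_eq_mul]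
  ring

lemma aux_mean {Ω : Type*} [MeasurableSpace Ω] (P : Measure Ω) [IsProbabilityMeasure P]
    (X : ℕ → Ω → ℝ) (X₀ Y X₀' Y' : Ω → ℝ)
    (hX₀ : Measurable X₀) (hX₀' : Measurable X₀') (hY' : Measurable Y')
    (hYpos : ∀ᵐ ω ∂P, 0 < Y ω) (hY'pos : ∀ᵐ ω ∂P, 0 < Y' ω)
    (hCLT : ∀ A : Set Ω, MeasurableSet A → 0 < P A → ∀ t : ℝ,
      Tendsto (fun N : ℕ =>
          ((P[|A]) {ω | (∑ k ∈ Finset.Icc 1 N, (X k ω - X₀ ω)) / (Y ω * Real.sqrt N) < t}).toReal)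
        atTop (nhds ((gaussianReal 0 1 (Set.Iio t)).toReal)))
    (hCLT' : ∀ A : Set Ω, MeasurableSet A → 0 < P A → ∀ t : ℝ,
      Tendsto (fun N : ℕ =>
          ((P[|A]) {ω | (∑ k ∈ Finset.Icc 1 N, (X k ω - X₀' ω)) / (Y' ω * Real.sqrt N) < t}).toReal)
        atTop (nhds ((gaussianReal 0 1 (Set.Iio t)).toReal))) :
    P {ω | X₀' ω < X₀ ω} = 0 := by
  set A : ℕ → ℕ → Set Ω :=
    fun n m => {ω | X₀' ω + 1 / ((n : ℝ) + 1) ≤ X₀ ω ∧ Y' ω ≤ (m : ℝ)} with hAdef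
  have hAmeas : ∀ n m, MeasurableSet (A n m) := by
    intro n m
    exact ((measurableSet_le (hX₀'.add measurable_const) hX₀).inter
      (measurableSet_le hY' measurable_const))
  have hsub : {ω | X₀' ω < X₀ ω} ⊆ ⋃ n, ⋃ m, A n m := by
    intro ω hω
    have hω' : X₀' ω < X₀ ω := hω
    obtain ⟨n, hn⟩ := exists_nat_one_div_lt (sub_pos.mpr hω')
    obtain ⟨m, hm⟩ := exists_nat_ge (Y' ω)
    exact Set.mem_iUnion.mpr ⟨n, Set.mem_iUnion.mpr ⟨m, ⟨by linarith, hm⟩⟩⟩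
  have hzero : ∀ n m, P (A n m) = 0 := by
    intro n m
    by_contra hne
    have hpos : 0 < P (A n m) := pos_iff_ne_zero.mpr hne
    refine main_contra P (hAmeas n m) hpos
      (fun N ω => (∑ k ∈ Finset.Icc 1 N, (X k ω - X₀' ω)) / (Y' ω * Real.sqrt N))
      (fun N ω => (∑ k ∈ Finset.Icc 1 N, (X k ω - X₀ ω)) / (Y ω * Real.sqrt N))
      0 1 one_pos
      (hCLT' (A n m) (hAmeas n m) hpos 1) (hCLT (A n m) (hAmeas n m) hpos 0) ?_
    filter_upwards [eventually_ge_atTop (max 1 (Nat.ceil (((m : ℝ) * ((n : ℝ) + 1)) ^ 2)))]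
      with N hN
    have hN1 : 1 ≤ N := le_trans (le_max_left _ _) hN
    have hN2 : ((m : ℝ) * ((n : ℝ) + 1)) ^ 2 ≤ (N : ℝ) := by
      refine le_trans (Nat.le_ceil _) ?_
      exact_mod_cast le_trans (le_max_right _ _) hN
    have hNpos : (0 : ℝ) < N := by exact_mod_cast hN1
    have hsq : (0 : ℝ) < Real.sqrt N := Real.sqrt_pos.mpr hNpos
    have hb : (m : ℝ) * ((n : ℝ) + 1) ≤ Real.sqrt N :=
      (Real.le_sqrt (by positivity) hNpos.le).mpr hN2
    filter_upwards [hYpos, hY'pos] with ω hy hy' hmem hF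
    have hY'sq : (0 : ℝ) < Y' ω * Real.sqrt N := mul_pos hy' hsq
    have hW : (∑ k ∈ Finset.Icc 1 N, (X k ω - X₀' ω)) < Y' ω * Real.sqrt N :=
      (div_lt_one hY'sq).mp hF
    have hW2 : (∑ k ∈ Finset.Icc 1 N, (X k ω - X₀' ω)) < (m : ℝ) * Real.sqrt N :=
      lt_of_lt_of_le hW (mul_le_mul_of_nonneg_right hmem.2 hsq.le)
    have h2 : (m : ℝ) * Real.sqrt N ≤ (N : ℝ) * (1 / ((n : ℝ) + 1)) := by
      rw [mul_one_div, le_div_iff₀ (by positivity : (0 : ℝ) < (n : ℝ) + 1)]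
      calc (m : ℝ) * Real.sqrt N * ((n : ℝ) + 1)
          = ((m : ℝ) * ((n : ℝ) + 1)) * Real.sqrt N := by ring
        _ ≤ Real.sqrt N * Real.sqrt N :=
            mul_le_mul_of_nonneg_right hb (Real.sqrt_nonneg _)
        _ = (N : ℝ) := Real.mul_self_sqrt hNpos.le
    have h3 : (N : ℝ) * (1 / ((n : ℝ) + 1)) ≤ (N : ℝ) * (X₀ ω - X₀' ω) := by
      refine mul_le_mul_of_nonneg_left (by linarith [hmem.1]) hNpos.le
    have hZ : (∑ k ∈ Finset.Icc 1 N, (X k ω - X₀ ω)) < 0 := by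
      rw [sum_center_eq X X₀ X₀' N ω]
      linarith
    exact div_neg_of_neg_of_pos hZ (mul_pos hy hsq)
  have : P (⋃ n, ⋃ m, A n m) = 0 :=
    measure_iUnion_null fun n => measure_iUnion_null fun m => hzero n m
  exact le_antisymm (le_trans (measure_mono hsub) this.le) zero_le

lemma aux_var {Ω : Type*} [MeasurableSpace Ω] (P : Measure Ω) [IsProbabilityMeasure P]
    (X : ℕ → Ω → ℝ) (X₀ Y X₀' Y' : Ω → ℝ)
    (hY : Measurable Y) (hY' : Measurable Y')
    (hYpos : ∀ᵐ ω ∂P, 0 < Y ω) (hY'pos : ∀ᵐ ω ∂P, 0 < Y' ω)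
    (heq : X₀ =ᵐ[P] X₀')
    (hCLT : ∀ A : Set Ω, MeasurableSet A → 0 < P A → ∀ t : ℝ,
      Tendsto (fun N : ℕ =>
          ((P[|A]) {ω | (∑ k ∈ Finset.Icc 1 N, (X k ω - X₀ ω)) / (Y ω * Real.sqrt N) < t}).toReal)
        atTop (nhds ((gaussianReal 0 1 (Set.Iio t)).toReal)))
    (hCLT' : ∀ A : Set Ω, MeasurableSet A → 0 < P A → ∀ t : ℝ,
      Tendsto (fun N : ℕ =>
          ((P[|A]) {ω | (∑ k ∈ Finset.Icc 1 N, (X k ω - X₀' ω)) / (Y' ω * Real.sqrt N) < t}).toReal)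
        atTop (nhds ((gaussianReal 0 1 (Set.Iio t)).toReal))) :
    P {ω | Y ω < Y' ω} = 0 := by
  set A : ℕ → Set Ω :=
    fun n => {ω | Y ω * (1 + 1 / ((n : ℝ) + 1)) ≤ Y' ω} with hAdef
  have hAmeas : ∀ n, MeasurableSet (A n) :=
    fun n => measurableSet_le (hY.mul measurable_const) hY'
  have hzero : ∀ n, P (A n) = 0 := by
    intro n
    by_contra hne
    have hpos : 0 < P (A n) := pos_iff_ne_zero.mpr hne
    have hcpos : (0 : ℝ) < 1 + 1 / ((n : ℝ) + 1) := by positivity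
    have hclt : 1 / (1 + 1 / ((n : ℝ) + 1)) < 1 := by
      rw [div_lt_one hcpos]
      have : (0 : ℝ) < 1 / ((n : ℝ) + 1) := by positivity
      linarith
    refine main_contra P (hAmeas n) hpos
      (fun N ω => (∑ k ∈ Finset.Icc 1 N, (X k ω - X₀ ω)) / (Y ω * Real.sqrt N))
      (fun N ω => (∑ k ∈ Finset.Icc 1 N, (X k ω - X₀' ω)) / (Y' ω * Real.sqrt N))
      (1 / (1 + 1 / ((n : ℝ) + 1))) 1 hclt
      (hCLT (A n) (hAmeas n) hpos 1)
      (hCLT' (A n) (hAmeas n) hpos (1 / (1 + 1 / ((n : ℝ) + 1)))) ?_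
    filter_upwards [eventually_ge_atTop 1] with N hN1
    have hNpos : (0 : ℝ) < N := by exact_mod_cast hN1
    have hsq : (0 : ℝ) < Real.sqrt N := Real.sqrt_pos.mpr hNpos
    filter_upwards [hYpos, hY'pos, heq] with ω hy hy' heqω hmem hF
    have hYsq : (0 : ℝ) < Y ω * Real.sqrt N := mul_pos hy hsq
    have hY'sq : (0 : ℝ) < Y' ω * Real.sqrt N := mul_pos hy' hsq
    have hZ : (∑ k ∈ Finset.Icc 1 N, (X k ω - X₀ ω)) < Y ω * Real.sqrt N :=
      (div_lt_one hYsq).mp hF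
    have hW : (∑ k ∈ Finset.Icc 1 N, (X k ω - X₀' ω))
        = (∑ k ∈ Finset.Icc 1 N, (X k ω - X₀ ω)) := by
      exact Finset.sum_congr rfl fun k _ => by rw [heqω]
    rw [hW, div_lt_div_iff₀ hY'sq hcpos]
    have step1 : (∑ k ∈ Finset.Icc 1 N, (X k ω - X₀ ω)) * (1 + 1 / ((n : ℝ) + 1))
        < (Y ω * Real.sqrt N) * (1 + 1 / ((n : ℝ) + 1)) :=
      mul_lt_mul_of_pos_right hZ hcpos
    have step2 : (Y ω * (1 + 1 / ((n : ℝ) + 1))) * Real.sqrt N ≤ Y' ω * Real.sqrt N :=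
      mul_le_mul_of_nonneg_right hmem hsq.le
    nlinarith [step1, step2]
  have hsub : ∀ᵐ ω ∂P, ω ∈ {ω | Y ω < Y' ω} → ω ∈ ⋃ n, A n := by
    filter_upwards [hYpos] with ω hy hω
    have hlt : (0 : ℝ) < (Y' ω - Y ω) / Y ω := div_pos (sub_pos.mpr hω) hy
    obtain ⟨n, hn⟩ := exists_nat_one_div_lt hlt
    refine Set.mem_iUnion.mpr ⟨n, ?_⟩
    have : Y ω * (1 / ((n : ℝ) + 1)) < Y' ω - Y ω := by
      rw [← lt_div_iff₀' hy] at *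
      · linarith [hn]
    show Y ω * (1 + 1 / ((n : ℝ) + 1)) ≤ Y' ω
    nlinarith
  have hz : P (⋃ n, A n) = 0 := measure_iUnion_null hzero
  have := measure_mono_ae hsub
  exact le_antisymm (le_trans this hz.le) zero_le

theorem stmt_10 {Ω : Type*} [MeasurableSpace Ω] (P : Measure Ω) [IsProbabilityMeasure P]
    (X : ℕ → Ω → ℝ) (hX : ∀ n, Measurable (X n))
    (X₀ Y X₀' Y' : Ω → ℝ)
    (hX₀ : Measurable X₀) (hY : Measurable Y) (hX₀' : Measurable X₀') (hY' : Measurable Y')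
    (hYpos : ∀ᵐ ω ∂P, 0 < Y ω) (hY'pos : ∀ᵐ ω ∂P, 0 < Y' ω)
    (hCLT : ∀ A : Set Ω, MeasurableSet A → 0 < P A → ∀ t : ℝ,
      Tendsto (fun N : ℕ =>
          ((P[|A]) {ω | (∑ k ∈ Finset.Icc 1 N, (X k ω - X₀ ω)) / (Y ω * Real.sqrt N) < t}).toReal)
        atTop (nhds ((gaussianReal 0 1 (Set.Iio t)).toReal)))
    (hCLT' : ∀ A : Set Ω, MeasurableSet A → 0 < P A → ∀ t : ℝ,
      Tendsto (fun N : ℕ =>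
          ((P[|A]) {ω | (∑ k ∈ Finset.Icc 1 N, (X k ω - X₀' ω)) / (Y' ω * Real.sqrt N) < t}).toReal)
        atTop (nhds ((gaussianReal 0 1 (Set.Iio t)).toReal))) :
    X₀ =ᵐ[P] X₀' ∧ Y =ᵐ[P] Y' := by
  have h1 : P {ω | X₀' ω < X₀ ω} = 0 :=
    aux_mean P X X₀ Y X₀' Y' hX₀ hX₀' hY' hYpos hY'pos hCLT hCLT'
  have h2 : P {ω | X₀ ω < X₀' ω} = 0 :=
    aux_mean P X X₀' Y' X₀ Y hX₀' hX₀ hY hY'pos hYpos hCLT' hCLT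
  have heq : X₀ =ᵐ[P] X₀' := by
    have e1 : ∀ᵐ ω ∂P, ¬ (X₀' ω < X₀ ω) := by
      rw [ae_iff]; simpa using h1
    have e2 : ∀ᵐ ω ∂P, ¬ (X₀ ω < X₀' ω) := by
      rw [ae_iff]; simpa using h2
    filter_upwards [e1, e2] with ω w1 w2
    exact le_antisymm (not_lt.mp w1) (not_lt.mp w2)
  refine ⟨heq, ?_⟩
  have g1 : P {ω | Y ω < Y' ω} = 0 :=
    aux_var P X X₀ Y X₀' Y' hY hY' hYpos hY'pos heq hCLT hCLT'
  have g2 : P {ω | Y' ω < Y ω} = 0 :=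
    aux_var P X X₀' Y' X₀ Y hY' hY hY'pos hYpos heq.symm hCLT' hCLT
  have e1 : ∀ᵐ ω ∂P, ¬ (Y ω < Y' ω) := by
    rw [ae_iff]; simpa using g1
  have e2 : ∀ᵐ ω ∂P, ¬ (Y' ω < Y ω) := by
    rw [ae_iff]; simpa using g2
  filter_upwards [e1, e2] with ω w1 w2
  exact le_antisymm (not_lt.mp w2) (not_lt.mp w1)
end

section
/- Let ξ and η be i.i.d. real random variables with distribution function F and let t > 0 with P(|ξ| ≤ t) ≥ 1/2. Then E[(ξ−η)²·1_{|ξ|≤t, |η|≤t}] ≥ ∫_{|x|≤t} x² dF(x) − 2(∫_{|x|≤t} x dF(x))². -/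
open MeasureTheory ProbabilityTheory

theorem stmt_11 {Ω : Type*} [MeasurableSpace Ω] (P : Measure Ω) [IsProbabilityMeasure P]
    (ξ η : Ω → ℝ) (hξ : Measurable ξ) (hη : Measurable η)
    (hindep : IndepFun ξ η P) (hid : IdentDistrib ξ η P P)
    (t : ℝ) (ht : 0 < t)
    (hhalf : (1:ℝ)/2 ≤ (P {ω | |ξ ω| ≤ t}).toReal) :
    (∫ x in {x : ℝ | |x| ≤ t}, x ^ 2 ∂(P.map ξ))
        - 2 * (∫ x in {x : ℝ | |x| ≤ t}, x ∂(P.map ξ)) ^ 2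
      ≤ ∫ ω in {ω | |ξ ω| ≤ t ∧ |η ω| ≤ t}, (ξ ω - η ω) ^ 2 ∂P := by
  set S : Set ℝ := {x : ℝ | |x| ≤ t} with hS_def
  have hS : MeasurableSet S := measurableSet_le measurable_abs measurable_const
  set g1 : ℝ → ℝ := S.indicator (fun x => x ^ 2) with hg1_def
  set g2 : ℝ → ℝ := S.indicator (fun x => x) with hg2_def
  set g3 : ℝ → ℝ := S.indicator (fun _ => 1) with hg3_def
  have hmg1 : Measurable g1 := (measurable_id.pow_const 2).indicator hS
  have hmg2 : Measurable g2 := measurable_id.indicator hS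
  have hmg3 : Measurable g3 := measurable_const.indicator hS
  have hb1 : ∀ x, ‖g1 x‖ ≤ t ^ 2 := by
    intro x
    rw [hg1_def]
    by_cases hx : x ∈ S
    · rw [Set.indicator_of_mem hx]
      have hxt : |x| ≤ t := hx
      rw [Real.norm_eq_abs, abs_pow]
      nlinarith [abs_nonneg x]
    · rw [Set.indicator_of_notMem hx]
      simp only [norm_zero]
      positivity
  have hb2 : ∀ x, ‖g2 x‖ ≤ t := by
    intro x
    rw [hg2_def]
    by_cases hx : x ∈ S
    · rw [Set.indicator_of_mem hx]; exact hx
    · rw [Set.indicator_of_notMem hx]; simp [le_of_lt ht]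
  have hb3 : ∀ x, ‖g3 x‖ ≤ 1 := by
    intro x
    rw [hg3_def]
    by_cases hx : x ∈ S
    · rw [Set.indicator_of_mem hx]; simp
    · rw [Set.indicator_of_notMem hx]; simp
  -- integrability of products
  have hint : ∀ (g h : ℝ → ℝ) (C D : ℝ), Measurable g → Measurable h →
      (∀ x, ‖g x‖ ≤ C) → (∀ x, ‖h x‖ ≤ D) →
      Integrable (fun ω => g (ξ ω) * h (η ω)) P := by
    intro g h C D hg hh hgb hhb
    have h0C : 0 ≤ C := le_trans (norm_nonneg _) (hgb 0)
    refine (integrable_const (C * D)).mono'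
      (((hg.comp hξ).mul (hh.comp hη)).aestronglyMeasurable) (ae_of_all _ fun ω => ?_)
    rw [norm_mul]
    exact mul_le_mul (hgb _) (hhb _) (norm_nonneg _) h0C
  have i13 := hint g1 g3 (t ^ 2) 1 hmg1 hmg3 hb1 hb3
  have i22 := hint g2 g2 t t hmg2 hmg2 hb2 hb2
  have i31 := hint g3 g1 1 (t ^ 2) hmg3 hmg1 hb3 hb1
  -- change of variables for single integrals
  have hcomp : ∀ (g : ℝ → ℝ), Measurable g →
      (∫ ω, g (ξ ω) ∂P) = ∫ x, g x ∂(P.map ξ) ∧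
      (∫ ω, g (η ω) ∂P) = ∫ x, g x ∂(P.map ξ) := by
    intro g hg
    constructor
    · exact (integral_map hξ.aemeasurable hg.aestronglyMeasurable).symm
    · rw [hid.map_eq]
      exact (integral_map hη.aemeasurable hg.aestronglyMeasurable).symm
  -- independence factorizations
  have find : ∀ (g h : ℝ → ℝ), Measurable g → Measurable h →
      (∫ ω, g (ξ ω) * h (η ω) ∂P) = (∫ x, g x ∂(P.map ξ)) * (∫ x, h x ∂(P.map ξ)) := by
    intro g h hg hh
    have hi : IndepFun (g ∘ ξ) (h ∘ η) P := hindep.comp hg hh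
    have := hi.integral_mul_eq_mul_integral ((hg.comp hξ).aestronglyMeasurable)
      ((hh.comp hη).aestronglyMeasurable)
    calc (∫ ω, g (ξ ω) * h (η ω) ∂P) = ∫ ω, ((g ∘ ξ) * (h ∘ η)) ω ∂P := rfl
      _ = (∫ ω, (g ∘ ξ) ω ∂P) * (∫ ω, (h ∘ η) ω ∂P) := this
      _ = (∫ x, g x ∂(P.map ξ)) * (∫ x, h x ∂(P.map ξ)) := by
          simp only [Function.comp]
          rw [(hcomp g hg).1, (hcomp h hh).2]
  -- the target set
  have hT : MeasurableSet {ω | |ξ ω| ≤ t ∧ |η ω| ≤ t} := by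
    have : {ω | |ξ ω| ≤ t ∧ |η ω| ≤ t} = {ω | |ξ ω| ≤ t} ∩ {ω | |η ω| ≤ t} := rfl
    rw [this]
    exact (measurableSet_le hξ.abs measurable_const).inter
      (measurableSet_le hη.abs measurable_const)
  -- pointwise identity
  have hpt : Set.indicator {ω | |ξ ω| ≤ t ∧ |η ω| ≤ t} (fun ω => (ξ ω - η ω) ^ 2) =
      fun ω => g1 (ξ ω) * g3 (η ω) - 2 * (g2 (ξ ω) * g2 (η ω)) + g3 (ξ ω) * g1 (η ω) := by
    funext ω
    by_cases h1 : ξ ω ∈ S <;> by_cases h2 : η ω ∈ S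
    · have hm : ω ∈ {ω | |ξ ω| ≤ t ∧ |η ω| ≤ t} := ⟨h1, h2⟩
      rw [Set.indicator_of_mem hm, hg1_def, hg2_def, hg3_def]
      simp only [Set.indicator_of_mem h1, Set.indicator_of_mem h2]
      ring
    · have hm : ω ∉ {ω | |ξ ω| ≤ t ∧ |η ω| ≤ t} := fun h => h2 h.2
      rw [Set.indicator_of_notMem hm, hg1_def, hg2_def, hg3_def]
      simp [Set.indicator_of_notMem h2]
    · have hm : ω ∉ {ω | |ξ ω| ≤ t ∧ |η ω| ≤ t} := fun h => h1 h.1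
      rw [Set.indicator_of_notMem hm, hg1_def, hg2_def, hg3_def]
      simp [Set.indicator_of_notMem h1]
    · have hm : ω ∉ {ω | |ξ ω| ≤ t ∧ |η ω| ≤ t} := fun h => h1 h.1
      rw [Set.indicator_of_notMem hm, hg1_def, hg2_def, hg3_def]
      simp [Set.indicator_of_notMem h1]
  -- notation
  set s : ℝ := ∫ x in S, x ^ 2 ∂(P.map ξ) with hs_def
  set m : ℝ := ∫ x in S, x ∂(P.map ξ) with hm_def
  set p : ℝ := (P {ω | |ξ ω| ≤ t}).toReal with hp_def
  have hg1int : (∫ x, g1 x ∂(P.map ξ)) = s := by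
    rw [hg1_def, integral_indicator hS]
  have hg2int : (∫ x, g2 x ∂(P.map ξ)) = m := by
    rw [hg2_def, integral_indicator hS]
  have hg3int : (∫ x, g3 x ∂(P.map ξ)) = p := by
    rw [hg3_def, integral_indicator hS]
    simp only [integral_const]
    rw [measureReal_restrict_apply_univ, map_measureReal_apply hξ hS]
    simp [hp_def]
    rfl
  -- compute the RHS
  have hRHS : (∫ ω in {ω | |ξ ω| ≤ t ∧ |η ω| ≤ t}, (ξ ω - η ω) ^ 2 ∂P)
      = s * p - 2 * (m * m) + p * s := by
    rw [← integral_indicator hT, hpt]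
    have hf : Integrable (fun ω => g1 (ξ ω) * g3 (η ω) - 2 * (g2 (ξ ω) * g2 (η ω))) P :=
      i13.sub (i22.const_mul 2)
    simp only [integral_add hf i31, integral_sub i13 (i22.const_mul 2), integral_const_mul,
      find g1 g3 hmg1 hmg3, find g2 g2 hmg2 hmg2, find g3 g1 hmg3 hmg1,
      hg1int, hg2int, hg3int]
  rw [hRHS]
  have hs0 : 0 ≤ s := by
    rw [hs_def]
    exact setIntegral_nonneg hS (fun x _ => sq_nonneg x)
  nlinarith [mul_nonneg hs0 (by linarith : (0:ℝ) ≤ 2 * p - 1)]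
end

section
/- Let μ be a random probability measure on ℝ (a measurable map from a probability space to the space of Borel probability measures) and let (Y_n) be a sequence of random variables that are conditionally i.i.d. given the σ-algebra generated by μ, with conditional distribution μ. Suppose ∫ x² dμ(x) < ∞ a.s. and let X = E[Y_1 | μ] (the conditional mean, i.e., ∫x dμ) and Z = Var(Y_1 | μ) = ∫x² dμ − X². Then N^{-1/2} ∑_{k=1}^N (Y_k − X) converges in distribution to the variance-mixture normal N(0, Z), the distribution with characteristic function t ↦ E[exp(−Z t²/2)]. -/
open MeasureTheory ProbabilityTheory Filter

section AuxStmt18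
open Complex

-- bounded measurable functions are integrable on probability (finite) measures
lemma intble {Ω E : Type*} [MeasurableSpace Ω] [NormedAddCommGroup E] {P : Measure Ω}
    [IsFiniteMeasure P] {F : Ω → E} (hF : AEStronglyMeasurable F P) {C : ℝ}
    (hC : ∀ ω, ‖F ω‖ ≤ C) : Integrable F P :=
  Integrable.mono' (integrable_const C) hF (Filter.Eventually.of_forall hC)

-- measurability of ν ↦ ∫ f dν, real version
lemma meas_int_real {f : ℝ → ℝ} (hf : Measurable f) :
    Measurable fun ν : Measure ℝ => ∫ x, f x ∂ν := by
  have hS : MeasurableSet {ν : Measure ℝ | ∫⁻ x, ‖f x‖₊ ∂ν < ⊤} :=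
    measurableSet_lt (Measure.measurable_lintegral hf.nnnorm.coe_nnreal_ennreal) measurable_const
  have h1 : Measurable fun ν : Measure ℝ =>
      (∫⁻ x, ENNReal.ofReal (f x) ∂ν).toReal - (∫⁻ x, ENNReal.ofReal (-(f x)) ∂ν).toReal :=
    ((Measure.measurable_lintegral (ENNReal.measurable_ofReal.comp hf)).ennreal_toReal).sub
      ((Measure.measurable_lintegral (ENNReal.measurable_ofReal.comp hf.neg)).ennreal_toReal)
  have : (fun ν : Measure ℝ => ∫ x, f x ∂ν) =
      Set.piecewise {ν : Measure ℝ | ∫⁻ x, ‖f x‖₊ ∂ν < ⊤}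
        (fun ν => (∫⁻ x, ENNReal.ofReal (f x) ∂ν).toReal
          - (∫⁻ x, ENNReal.ofReal (-(f x)) ∂ν).toReal) 0 := by
    ext ν
    by_cases hν : ν ∈ {ν : Measure ℝ | ∫⁻ x, ‖f x‖₊ ∂ν < ⊤}
    · rw [Set.piecewise_eq_of_mem _ _ _ hν]
      exact integral_eq_lintegral_pos_part_sub_lintegral_neg_part
        ⟨hf.aestronglyMeasurable, hν⟩
    · rw [Set.piecewise_eq_of_notMem _ _ _ hν]
      exact integral_undef (fun h => hν h.2)
  rw [this]
  exact Measurable.piecewise hS h1 measurable_const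

-- complex version
lemma meas_int_complex {f : ℝ → ℂ} (hf : Measurable f) :
    Measurable fun ν : Measure ℝ => ∫ x, f x ∂ν := by
  have hS : MeasurableSet {ν : Measure ℝ | ∫⁻ x, ‖f x‖₊ ∂ν < ⊤} :=
    measurableSet_lt (Measure.measurable_lintegral hf.nnnorm.coe_nnreal_ennreal) measurable_const
  have h1 : Measurable fun ν : Measure ℝ =>
      ((∫ x, (f x).re ∂ν : ℝ) : ℂ) + ((∫ x, (f x).im ∂ν : ℝ) : ℂ) * Complex.I :=
    ((Complex.measurable_ofReal.comp (meas_int_real (Complex.measurable_re.comp hf))).add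
      ((Complex.measurable_ofReal.comp
        (meas_int_real (Complex.measurable_im.comp hf))).mul_const _))
  have : (fun ν : Measure ℝ => ∫ x, f x ∂ν) =
      Set.piecewise {ν : Measure ℝ | ∫⁻ x, ‖f x‖₊ ∂ν < ⊤}
        (fun ν => ((∫ x, (f x).re ∂ν : ℝ) : ℂ) + ((∫ x, (f x).im ∂ν : ℝ) : ℂ) * Complex.I)
        0 := by
    ext ν
    by_cases hν : ν ∈ {ν : Measure ℝ | ∫⁻ x, ‖f x‖₊ ∂ν < ⊤}
    · rw [Set.piecewise_eq_of_mem _ _ _ hν]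
      have hint : Integrable f ν := ⟨hf.aestronglyMeasurable, hν⟩
      have h2 := integral_coe_re_add_coe_im (𝕜 := ℂ) hint
      rw [integral_ofReal, integral_ofReal] at h2
      simpa using h2.symm
    · rw [Set.piecewise_eq_of_notMem _ _ _ hν]
      exact integral_undef (fun h => hν h.2)
  rw [this]
  exact Measurable.piecewise hS h1 measurable_const

-- |a^n - b^n| ≤ n |a-b| for norms ≤ 1
lemma powdiff (n : ℕ) (a b : ℂ) (ha : ‖a‖ ≤ 1) (hb : ‖b‖ ≤ 1) :
    ‖a ^ n - b ^ n‖ ≤ n * ‖a - b‖ := by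
  induction n with
  | zero => simp
  | succ n ih =>
    have : a ^ (n + 1) - b ^ (n + 1) = a * (a ^ n - b ^ n) + (a - b) * b ^ n := by ring
    rw [this]
    calc ‖a * (a ^ n - b ^ n) + (a - b) * b ^ n‖
        ≤ ‖a * (a ^ n - b ^ n)‖ + ‖(a - b) * b ^ n‖ := norm_add_le _ _
      _ ≤ 1 * (n * ‖a - b‖) + ‖a - b‖ * 1 := by
          rw [norm_mul, norm_mul]
          have hbn : ‖b ^ n‖ ≤ 1 := by
            rw [norm_pow]
            calc ‖b‖ ^ n ≤ 1 ^ n := by gcongr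
              _ = 1 := one_pow _
          have h0 : (0:ℝ) ≤ ‖a - b‖ := norm_nonneg _
          have h0' : (0:ℝ) ≤ ‖a ^ n - b ^ n‖ := norm_nonneg _
          have h0a : (0:ℝ) ≤ ‖a‖ := norm_nonneg _
          nlinarith
      _ = (↑(n + 1) : ℝ) * ‖a - b‖ := by push_cast; ring

-- (c N)^N → exp z when N (c N - 1) → z, z real ≤ 0, ‖c N‖ ≤ 1
lemma pow_tendsto_exp (c : ℕ → ℂ) (h1 : ∀ N, ‖c N‖ ≤ 1) (z : ℝ) (hz : z ≤ 0)
    (hlim : Tendsto (fun N : ℕ => (N : ℂ) * (c N - 1)) atTop (nhds (z : ℂ))) :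
    Tendsto (fun N : ℕ => c N ^ N) atTop (nhds (Complex.exp (z : ℂ))) := by
  have hb : Tendsto (fun N : ℕ => ((1 + z / N : ℝ) : ℂ) ^ N) atTop
      (nhds (Complex.exp (z : ℂ))) := by
    have := Real.tendsto_one_add_div_pow_exp z
    have h2 : Tendsto (fun N : ℕ => (((1 + z / N) ^ N : ℝ) : ℂ)) atTop
        (nhds ((Real.exp z : ℝ) : ℂ)) := by
      exact (Complex.continuous_ofReal.tendsto _).comp this
    simpa [Complex.ofReal_exp, Complex.ofReal_pow] using h2
  have hdiff : Tendsto (fun N : ℕ => c N ^ N - ((1 + z / N : ℝ) : ℂ) ^ N) atTop (nhds 0) := by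
    have hnorm : Tendsto (fun N : ℕ => ‖(N : ℂ) * (c N - 1) - (z : ℂ)‖) atTop (nhds 0) := by
      have := (hlim.sub (tendsto_const_nhds (x := (z : ℂ)))).norm
      simpa using this
    apply squeeze_zero_norm' _ hnorm
    filter_upwards [Filter.eventually_ge_atTop 1,
      Filter.eventually_ge_atTop (Nat.ceil (-z))] with N hN1 hN2
    have hNpos : (0:ℝ) < N := by exact_mod_cast hN1
    have hbN : ‖((1 + z / N : ℝ) : ℂ)‖ ≤ 1 := by
      have h1' : -z ≤ N := le_trans (Nat.le_ceil _) (by exact_mod_cast hN2)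
      have hd1 : z / N ≤ 0 := div_nonpos_of_nonpos_of_nonneg hz hNpos.le
      have hd2 : -1 ≤ z / N := by
        rw [neg_le, ← neg_div]
        exact div_le_one_of_le₀ h1' hNpos.le
      rw [Complex.norm_real, Real.norm_eq_abs, abs_le]
      constructor <;> linarith
    calc ‖c N ^ N - ((1 + z / N : ℝ) : ℂ) ^ N‖
        ≤ N * ‖c N - ((1 + z / N : ℝ) : ℂ)‖ := powdiff N _ _ (h1 N) hbN
      _ = ‖(N : ℂ) * (c N - ((1 + z / N : ℝ) : ℂ))‖ := by
          rw [norm_mul]; simp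
      _ = ‖(N : ℂ) * (c N - 1) - (z : ℂ)‖ := by
          congr 1
          have : ((N : ℂ)) ≠ 0 := by exact_mod_cast (by positivity : (N:ℝ) ≠ 0)
          push_cast
          field_simp
          ring
  have := hdiff.add hb
  simpa using this

noncomputable def Rfun (y : ℝ) : ℂ := Complex.exp (Complex.I * y) - 1 - Complex.I * y + (y:ℂ)^2/2

lemma Rfun_cont : Continuous Rfun := by
  unfold Rfun
  fun_prop

lemma Rsmall {y : ℝ} (hy : |y| ≤ 1) : ‖Rfun y‖ ≤ |y| ^ 3 := by
  have h := Complex.exp_bound (x := Complex.I * y) (by simpa using hy) (n := 3) (by norm_num)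
  have hsum : ∑ i ∈ Finset.range 3, (Complex.I * y) ^ i / (i.factorial : ℂ)
      = 1 + Complex.I * y - (y:ℂ)^2/2 := by
    rw [Finset.sum_range_succ, Finset.sum_range_succ, Finset.sum_range_one]
    have : (Complex.I * y)^2 = -((y:ℂ)^2) := by
      rw [mul_pow, Complex.I_sq]; ring
    rw [this]
    norm_num [Nat.factorial]
    ring
  rw [hsum] at h
  have habs : ‖Complex.I * (y:ℂ)‖ = |y| := by
    rw [norm_mul, Complex.norm_I, Complex.norm_real, Real.norm_eq_abs, one_mul]
  rw [habs] at h
  have : Rfun y = Complex.exp (Complex.I * y) - (1 + Complex.I * y - (y:ℂ)^2/2) := by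
    unfold Rfun; ring
  rw [this]
  calc ‖_‖ ≤ |y| ^ 3 * (4 / (3*6)) := by
        convert h using 2
        norm_num [Nat.factorial]
    _ ≤ |y| ^ 3 := by nlinarith [pow_nonneg (abs_nonneg y) 3]

lemma Rbound (y : ℝ) : ‖Rfun y‖ ≤ 4 * y ^ 2 := by
  by_cases hy : |y| ≤ 1
  · calc ‖Rfun y‖ ≤ |y| ^ 3 := Rsmall hy
      _ = |y| * |y|^2 := by ring
      _ ≤ 1 * y^2 := by rw [_root_.sq_abs]; exact mul_le_mul_of_nonneg_right hy (sq_nonneg y)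
      _ ≤ 4 * y^2 := by nlinarith [sq_nonneg y]
  · push_neg at hy
    have h2 : (1:ℝ) ≤ y^2 := by nlinarith [_root_.sq_abs y]
    have : ‖Rfun y‖ ≤ 1 + 1 + |y| + y^2/2 := by
      unfold Rfun
      calc ‖Complex.exp (Complex.I * y) - 1 - Complex.I * y + (y:ℂ)^2/2‖
          ≤ ‖Complex.exp (Complex.I * y) - 1 - Complex.I * y‖ + ‖((y:ℂ)^2/2)‖ := norm_add_le _ _
        _ ≤ (‖Complex.exp (Complex.I * y) - 1‖ + ‖Complex.I * (y:ℂ)‖) + ‖((y:ℂ)^2/2)‖ := by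
            gcongr; exact norm_sub_le _ _
        _ ≤ (‖Complex.exp (Complex.I * y)‖ + ‖(1:ℂ)‖ + ‖Complex.I * (y:ℂ)‖) + ‖((y:ℂ)^2/2)‖ := by
            gcongr; exact norm_sub_le _ _
        _ ≤ 1 + 1 + |y| + y^2/2 := by
            have h1 : ‖Complex.exp (Complex.I * y)‖ = 1 := by
              rw [Complex.norm_exp]
              simp
            have h3 : ‖Complex.I * (y:ℂ)‖ = |y| := by
              rw [norm_mul, Complex.norm_I, Complex.norm_real, Real.norm_eq_abs, one_mul]
            have h4 : ‖((y:ℂ)^2/2)‖ = y^2/2 := by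
              rw [norm_div, norm_pow, Complex.norm_real, Real.norm_eq_abs]
              simp [_root_.sq_abs]
            rw [h1, h3, h4]
            norm_num
    calc ‖Rfun y‖ ≤ 1 + 1 + |y| + y^2/2 := this
      _ ≤ y^2 + y^2 + y^2 + y^2 := by
          have : |y| ≤ y^2 := by nlinarith [_root_.sq_abs y, abs_nonneg y]
          nlinarith
      _ ≤ 4 * y^2 := by ring_nf; nlinarith [sq_nonneg y]

lemma sqrt_nat_tendsto : Tendsto (fun N : ℕ => Real.sqrt N) atTop atTop := by
  apply tendsto_atTop_atTop.mpr
  intro b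
  refine ⟨(Nat.ceil (max b 0))^2, fun n hn => ?_⟩
  have h1 : Real.sqrt ((Nat.ceil (max b 0))^2 : ℕ) ≤ Real.sqrt n := by
    apply Real.sqrt_le_sqrt; exact_mod_cast hn
  have h2 : b ≤ Real.sqrt ((Nat.ceil (max b 0))^2 : ℕ) := by
    push_cast
    rw [Real.sqrt_sq (by positivity)]
    calc b ≤ max b 0 := le_max_left _ _
      _ ≤ _ := Nat.le_ceil _
  linarith

lemma norm_exp_I_mul_real (a : ℝ) : ‖Complex.exp (Complex.I * a)‖ = 1 := by
  rw [Complex.norm_exp]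
  simp

lemma norm_exp_neg_I_mul_real (a : ℝ) : ‖Complex.exp (-(Complex.I * a))‖ = 1 := by
  rw [Complex.norm_exp]
  simp

lemma pointwise_claim (ν : Measure ℝ) [IsProbabilityMeasure ν]
    (hx2 : Integrable (fun x => x ^ 2) ν) (t : ℝ) :
    Tendsto (fun N : ℕ =>
        Complex.exp (-(Complex.I * ((t / Real.sqrt N : ℝ) : ℂ) * (N : ℂ) * ((∫ x, x ∂ν : ℝ) : ℂ)))
          * (∫ x, Complex.exp (Complex.I * ((t / Real.sqrt N : ℝ) : ℂ) * (x:ℂ)) ∂ν) ^ N)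
      atTop
      (nhds (Complex.exp ((-(((∫ x, x ^ 2 ∂ν) - (∫ x, x ∂ν) ^ 2) * t ^ 2 / 2) : ℝ) : ℂ))) := by
  set X : ℝ := ∫ x, x ∂ν with hXdef
  set Zv : ℝ := (∫ x, x ^ 2 ∂ν) - X ^ 2 with hZdef
  set s : ℕ → ℝ := fun N => t / Real.sqrt N with hsdef
  -- integrabilities
  have h1 : Integrable (fun x => x) ν := by
    refine Integrable.mono' (hx2.add (integrable_const 1)) measurable_id.aestronglyMeasurable ?_
    filter_upwards with x
    simp only [Pi.add_apply]
    rw [Real.norm_eq_abs]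
    nlinarith [sq_nonneg (|x| - 1), _root_.sq_abs x, abs_nonneg x]
  have hsub : Integrable (fun x => x - X) ν := h1.sub (integrable_const X)
  have hsubsq : Integrable (fun x => (x - X) ^ 2) ν := by
    have : (fun x => (x - X) ^ 2) = fun x => x ^ 2 - (2 * X) * x + X ^ 2 := by
      funext x; ring
    rw [this]
    exact (hx2.sub (h1.const_mul (2 * X))).add (integrable_const _)
  have hmean : ∫ x, (x - X) ∂ν = 0 := by
    rw [integral_sub h1 (integrable_const X), integral_const]
    simp [hXdef]
  have hvar : ∫ x, (x - X) ^ 2 ∂ν = Zv := by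
    have : (fun x => (x - X) ^ 2) = fun x => x ^ 2 - (2 * X) * x + X ^ 2 := by
      funext x; ring
    have i5 : Integrable (fun x : ℝ => x ^ 2 - 2 * X * x) ν := hx2.sub (h1.const_mul (2 * X))
    rw [this, integral_add i5 (integrable_const _),
      integral_sub hx2 (h1.const_mul (2 * X)), integral_const_mul, integral_const]
    simp [hZdef, ← hXdef]
    ring
  have hZnn : 0 ≤ Zv := by
    rw [← hvar]
    exact integral_nonneg fun x => sq_nonneg _
  -- the centered characteristic function
  set c : ℕ → ℂ := fun N => ∫ x, Complex.exp (Complex.I * (s N : ℂ) * ((x - X : ℝ) : ℂ)) ∂ν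
    with hcdef
  have hcont : ∀ N, Continuous fun x : ℝ => Complex.exp (Complex.I * (s N : ℂ) * ((x - X : ℝ) : ℂ)) := by
    intro N; fun_prop
  have hcint : ∀ N, Integrable (fun x : ℝ => Complex.exp (Complex.I * (s N : ℂ) * ((x - X : ℝ) : ℂ))) ν := by
    intro N
    refine intble ((hcont N).aestronglyMeasurable) (C := 1) fun x => ?_
    rw [mul_assoc, ← Complex.ofReal_mul]
    exact (norm_exp_I_mul_real _).le
  have hcnorm : ∀ N, ‖c N‖ ≤ 1 := by
    intro N
    refine le_trans (norm_integral_le_integral_norm _) ?_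
    have : ∀ x : ℝ, ‖Complex.exp (Complex.I * (s N : ℂ) * ((x - X : ℝ) : ℂ))‖ = 1 := by
      intro x; rw [mul_assoc, ← Complex.ofReal_mul]; exact norm_exp_I_mul_real _
    calc ∫ x, ‖Complex.exp (Complex.I * (s N : ℂ) * ((x - X : ℝ) : ℂ))‖ ∂ν
        = ∫ _x, (1:ℝ) ∂ν := by exact integral_congr_ae (Filter.Eventually.of_forall this)
      _ ≤ 1 := by simp
  -- A : sequence = c^N
  have hA : ∀ N : ℕ,
      Complex.exp (-(Complex.I * ((s N : ℝ) : ℂ) * (N : ℂ) * (X : ℂ)))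
          * (∫ x, Complex.exp (Complex.I * ((s N : ℝ) : ℂ) * (x:ℂ)) ∂ν) ^ N = c N ^ N := by
    intro N
    have e1 : Complex.exp (-(Complex.I * ((s N : ℝ) : ℂ) * (N : ℂ) * (X : ℂ)))
        = Complex.exp (-(Complex.I * ((s N : ℝ) : ℂ) * (X : ℂ))) ^ N := by
      rw [← Complex.exp_nat_mul]
      congr 1
      ring
    rw [e1, ← mul_pow]
    congr 1
    rw [← integral_const_mul]
    apply integral_congr_ae
    filter_upwards with x
    rw [← Complex.exp_add]
    congr 1
    push_cast
    ring
  -- C : key expansion for N ≥ 1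
  have hRint : ∀ N, Integrable (fun x => Rfun (s N * (x - X))) ν := by
    intro N
    refine Integrable.mono' ((hsubsq.const_mul (4 * (s N)^2))) ?_ ?_
    · exact (Rfun_cont.comp (by fun_prop : Continuous fun x : ℝ => s N * (x - X))).aestronglyMeasurable
    · filter_upwards with x
      calc ‖Rfun (s N * (x - X))‖ ≤ 4 * (s N * (x - X)) ^ 2 := Rbound _
        _ = 4 * (s N)^2 * (x - X)^2 := by ring
  have hexp : ∀ N, c N = (∫ x, Rfun (s N * (x - X)) ∂ν) + 1 - ((s N)^2 * Zv / 2 : ℝ) := by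
    intro N
    have hptw : ∀ x : ℝ, Complex.exp (Complex.I * (s N : ℂ) * ((x - X : ℝ) : ℂ))
        = Rfun (s N * (x - X)) + 1 + Complex.I * ((s N * (x - X) : ℝ) : ℂ)
          - ((((s N * (x - X))^2 / 2 : ℝ)) : ℂ) := by
      intro x
      unfold Rfun
      push_cast
      ring_nf
    calc c N = ∫ x, (Rfun (s N * (x - X)) + 1 + Complex.I * ((s N * (x - X) : ℝ) : ℂ)
          - ((((s N * (x - X))^2 / 2 : ℝ)) : ℂ)) ∂ν := by
          exact integral_congr_ae (Filter.Eventually.of_forall fun x => hptw x)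
      _ = (∫ x, Rfun (s N * (x - X)) ∂ν) + 1 - ((s N)^2 * Zv / 2 : ℝ) := by
          have i1 := hRint N
          have i2 : Integrable (fun _x : ℝ => (1:ℂ)) ν := integrable_const _
          have i3 : Integrable (fun x => Complex.I * ((s N * (x - X) : ℝ) : ℂ)) ν :=
            (((hsub.const_mul (s N)).ofReal).const_mul Complex.I)
          have i4' : Integrable (fun x : ℝ => (s N * (x - X))^2 / 2) ν := by
            have : (fun x : ℝ => (s N * (x - X))^2 / 2) = fun x => ((s N)^2/2) * (x - X)^2 := by
              funext x; ring
            rw [this]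
            exact hsubsq.const_mul _
          have i4 : Integrable (fun x : ℝ => ((((s N * (x - X))^2 / 2 : ℝ)) : ℂ)) ν := i4'.ofReal
          have iA : Integrable (fun x : ℝ => Rfun (s N * (x - X)) + 1
              + Complex.I * ((s N * (x - X) : ℝ) : ℂ)) ν := (i1.add i2).add i3
          have iB : Integrable (fun x : ℝ => Rfun (s N * (x - X)) + 1) ν := i1.add i2
          rw [integral_sub iA i4, integral_add iB i3, integral_add i1 i2]
          have e3 : ∫ x, Complex.I * ((s N * (x - X) : ℝ) : ℂ) ∂ν = 0 := by
            rw [integral_const_mul]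
            have : ∫ x, ((s N * (x - X) : ℝ) : ℂ) ∂ν = (((∫ x, s N * (x - X) ∂ν : ℝ)) : ℂ) :=
              integral_ofReal
            rw [this, integral_const_mul, hmean, mul_zero]
            simp
          have e4 : ∫ x, ((((s N * (x - X))^2 / 2 : ℝ)) : ℂ) ∂ν = (((s N)^2 * Zv / 2 : ℝ) : ℂ) := by
            have h5 : ∫ x, ((((s N * (x - X))^2 / 2 : ℝ)) : ℂ) ∂ν
                = ((∫ x, (s N * (x - X))^2 / 2 ∂ν : ℝ) : ℂ) := integral_ofReal
            rw [h5]
            congr 1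
            have : (fun x : ℝ => (s N * (x - X))^2 / 2) = fun x => ((s N)^2/2) * (x - X)^2 := by
              funext x; ring
            rw [this, integral_const_mul, hvar]
            ring
          rw [e3, e4]
          simp
  -- D : N * ∫ R → 0
  have hNs2 : ∀ N : ℕ, 1 ≤ N → (N:ℝ) * (s N)^2 = t^2 := by
    intro N hN
    have hNpos : (0:ℝ) < N := by exact_mod_cast hN
    have hsq2 : Real.sqrt N ^ 2 = (N:ℝ) := Real.sq_sqrt hNpos.le
    show (N:ℝ) * (t / Real.sqrt N)^2 = t^2
    rw [div_pow, hsq2]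
    field_simp
  have hNs2le : ∀ N : ℕ, (N:ℝ) * (s N)^2 ≤ t^2 := by
    intro N
    rcases Nat.eq_zero_or_pos N with h|h
    · subst h
      simp
      positivity
    · exact (hNs2 N h).le
  have hs0 : Tendsto (fun N : ℕ => s N) atTop (nhds 0) :=
    tendsto_const_nhds.div_atTop sqrt_nat_tendsto
  have hns3 : Tendsto (fun N : ℕ => (N:ℝ) * |s N|^3) atTop (nhds 0) := by
    have hlim0 : Tendsto (fun N : ℕ => |t|^3 / Real.sqrt N) atTop (nhds 0) :=
      tendsto_const_nhds.div_atTop sqrt_nat_tendsto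
    apply Tendsto.congr' _ hlim0
    filter_upwards [eventually_ge_atTop 1] with N hN
    have hNpos : (0:ℝ) < N := by exact_mod_cast hN
    have hsq : (0:ℝ) < Real.sqrt N := Real.sqrt_pos.mpr hNpos
    have h3 : Real.sqrt N ^ 3 = (N:ℝ) * Real.sqrt N := by
      have h2 : Real.sqrt N ^ 2 = (N:ℝ) := Real.sq_sqrt hNpos.le
      calc Real.sqrt N ^ 3 = Real.sqrt N ^ 2 * Real.sqrt N := by ring
        _ = (N:ℝ) * Real.sqrt N := by rw [h2]
    show |t|^3 / Real.sqrt N = (N:ℝ) * |t / Real.sqrt N|^3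
    rw [abs_div, _root_.abs_of_nonneg hsq.le, div_pow, h3]
    field_simp
  have hD : Tendsto (fun N : ℕ => (N:ℂ) * ∫ x, Rfun (s N * (x - X)) ∂ν) atTop (nhds 0) := by
    have hFmeas : ∀ N : ℕ,
        AEStronglyMeasurable (fun x : ℝ => (N:ℝ) * ‖Rfun (s N * (x - X))‖) ν := by
      intro N
      exact (continuous_const.mul
        ((Rfun_cont.comp (by fun_prop : Continuous fun x : ℝ => s N * (x - X))).norm)).aestronglyMeasurable
    have hbound : Integrable (fun x => 4 * t^2 * (x - X)^2) ν := by
      have : (fun x : ℝ => 4 * t^2 * (x - X)^2) = fun x => (4*t^2) * (x - X)^2 := by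
        funext x; ring
      rw [this]; exact hsubsq.const_mul _
    have hInt0 : Tendsto (fun N : ℕ => ∫ x, (N:ℝ) * ‖Rfun (s N * (x - X))‖ ∂ν) atTop
        (nhds (∫ _x, (0:ℝ) ∂ν)) := by
      apply tendsto_integral_of_dominated_convergence _ hFmeas hbound
      · intro N
        filter_upwards with x
        rw [Real.norm_eq_abs, _root_.abs_of_nonneg (by positivity)]
        calc (N:ℝ) * ‖Rfun (s N * (x-X))‖ ≤ (N:ℝ) * (4 * (s N * (x-X))^2) :=
              mul_le_mul_of_nonneg_left (Rbound _) (Nat.cast_nonneg N)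
          _ = 4 * ((N:ℝ) * (s N)^2) * (x-X)^2 := by ring
          _ ≤ 4 * t^2 * (x-X)^2 := by nlinarith [hNs2le N, sq_nonneg (x - X)]
      · filter_upwards with x
        have h1x : Tendsto (fun N : ℕ => |s N * (x - X)|) atTop (nhds 0) := by
          have := (hs0.mul_const (x - X)).abs
          simpa using this
        have h2x : ∀ᶠ N : ℕ in atTop, |s N * (x - X)| ≤ 1 :=
          (h1x.eventually_lt_const (by norm_num : (0:ℝ) < 1)).mono fun N h => h.le
        have hupper : Tendsto (fun N : ℕ => ((N:ℝ) * |s N|^3) * |x-X|^3) atTop (nhds 0) := by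
          have := hns3.mul_const (|x-X|^3)
          simpa using this
        apply tendsto_of_tendsto_of_tendsto_of_le_of_le' tendsto_const_nhds hupper
        · filter_upwards with N; positivity
        · filter_upwards [h2x] with N hN
          calc (N:ℝ) * ‖Rfun (s N * (x-X))‖ ≤ (N:ℝ) * |s N * (x-X)|^3 :=
                mul_le_mul_of_nonneg_left (Rsmall hN) (Nat.cast_nonneg N)
            _ = ((N:ℝ) * |s N|^3) * |x-X|^3 := by rw [abs_mul]; ring
    rw [integral_zero] at hInt0
    apply squeeze_zero_norm' _ hInt0
    filter_upwards with N
    rw [norm_mul, Complex.norm_natCast]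
    calc (N:ℝ) * ‖∫ x, Rfun (s N * (x - X)) ∂ν‖
        ≤ (N:ℝ) * ∫ x, ‖Rfun (s N * (x-X))‖ ∂ν :=
          mul_le_mul_of_nonneg_left (norm_integral_le_integral_norm _) (Nat.cast_nonneg N)
      _ = ∫ x, (N:ℝ) * ‖Rfun (s N * (x-X))‖ ∂ν := (integral_const_mul _ _).symm
  -- E : N (c N - 1) → -Zv t²/2
  have hE : Tendsto (fun N : ℕ => (N:ℂ) * (c N - 1)) atTop
      (nhds ((-(Zv * t^2 / 2) : ℝ) : ℂ)) := by
    have heq : ∀ᶠ N : ℕ in atTop,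
        (N:ℂ) * (∫ x, Rfun (s N * (x - X)) ∂ν) - ((t^2 * Zv / 2 : ℝ) : ℂ)
          = (N:ℂ) * (c N - 1) := by
      filter_upwards [eventually_ge_atTop 1] with N hN
      rw [hexp N]
      have h2 : (N:ℝ) * ((s N)^2 * Zv / 2) = t^2 * Zv / 2 := by
        rw [← hNs2 N hN]; ring
      have h3 : ((t^2 * Zv / 2 : ℝ) : ℂ) = (N:ℂ) * (((s N)^2 * Zv / 2 : ℝ) : ℂ) := by
        rw [← h2]; push_cast; ring
      rw [h3]; ring
    apply Tendsto.congr' heq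
    have hlim2 := hD.sub (tendsto_const_nhds (x := ((t^2 * Zv / 2 : ℝ) : ℂ)))
    have h0 : ((-(Zv * t^2 / 2) : ℝ) : ℂ) = 0 - ((t^2 * Zv / 2 : ℝ) : ℂ) := by
      push_cast; ring
    rw [h0]; exact hlim2
  have hfinal := pow_tendsto_exp c hcnorm (-(Zv * t^2 / 2))
    (by nlinarith [hZnn, sq_nonneg t]) hE
  have hgoal : (fun N : ℕ =>
      Complex.exp (-(Complex.I * ((s N : ℝ) : ℂ) * (N : ℂ) * (X : ℂ)))
        * (∫ x, Complex.exp (Complex.I * ((s N : ℝ) : ℂ) * (x:ℂ)) ∂ν) ^ N)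
      = fun N => c N ^ N := funext hA
  rw [hgoal]
  convert hfinal using 2
  all_goals (push_cast; ring)

lemma norm_int_le {ν : Measure ℝ} [IsProbabilityMeasure ν] {g : ℝ → ℂ}
    (hg : Measurable g) {D : ℝ} (hD : ∀ x, ‖g x‖ ≤ D) : ‖∫ x, g x ∂ν‖ ≤ D := by
  refine le_trans (norm_integral_le_integral_norm _) ?_
  calc ∫ x, ‖g x‖ ∂ν ≤ ∫ _x, D ∂ν :=
        integral_mono (intble hg.norm.aestronglyMeasurable
          (C := D) (fun x => by rw [Real.norm_eq_abs, _root_.abs_of_nonneg (norm_nonneg _)]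
                                exact hD x))
          (integrable_const D) hD
    _ = D := by simp

lemma slot_ext {Ω : Type*} [MeasurableSpace Ω] (P : Measure Ω) [IsProbabilityMeasure P]
    (μ : Ω → Measure ℝ) (hμmeas : Measurable μ) (hμprob : ∀ ω, IsProbabilityMeasure (μ ω))
    (Ya : Ω → ℝ) (hYa : Measurable Ya)
    (V W : Ω → ℂ) (hV : Measurable V) (hV1 : ∀ ω, ‖V ω‖ ≤ 1)
    (hW : Measurable W) (hW1 : ∀ ω, ‖W ω‖ ≤ 1)
    (hbase : ∀ B : Set ℝ, MeasurableSet B →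
      ∫ ω, Set.indicator B (fun _ => (1:ℂ)) (Ya ω) * V ω ∂P
        = ∫ ω, (∫ x, Set.indicator B (fun _ => (1:ℂ)) x ∂(μ ω)) * W ω ∂P)
    {q : ℝ → ℂ} (hq : Measurable q) {C : ℝ} (hqC : ∀ x, ‖q x‖ ≤ C) :
    ∫ ω, q (Ya ω) * V ω ∂P = ∫ ω, (∫ x, q x ∂(μ ω)) * W ω ∂P := by
  have LHSint : ∀ (g : ℝ → ℂ), Measurable g → ∀ (D : ℝ), (∀ x, ‖g x‖ ≤ D) →
      Integrable (fun ω => g (Ya ω) * V ω) P := by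
    intro g hg D hD
    have hDnn : 0 ≤ D := le_trans (norm_nonneg (g 0)) (hD 0)
    refine intble ((hg.comp hYa).mul hV).aestronglyMeasurable (C := D) fun ω => ?_
    rw [norm_mul]
    calc ‖g (Ya ω)‖ * ‖V ω‖ ≤ D * 1 :=
          mul_le_mul (hD _) (hV1 _) (norm_nonneg _) hDnn
      _ = D := mul_one D
  have RHSint : ∀ (g : ℝ → ℂ), Measurable g → ∀ (D : ℝ), (∀ x, ‖g x‖ ≤ D) →
      Integrable (fun ω => (∫ x, g x ∂(μ ω)) * W ω) P := by
    intro g hg D hD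
    have hDnn : 0 ≤ D := le_trans (norm_nonneg (g 0)) (hD 0)
    refine intble (((meas_int_complex hg).comp hμmeas).mul hW).aestronglyMeasurable
      (C := D) fun ω => ?_
    haveI := hμprob ω
    rw [norm_mul]
    calc ‖∫ x, g x ∂(μ ω)‖ * ‖W ω‖ ≤ D * 1 :=
          mul_le_mul (norm_int_le hg hD) (hW1 _) (norm_nonneg _) hDnn
      _ = D := mul_one D
  -- step 1 : constants times indicators
  have hconst : ∀ (c : ℂ) (B : Set ℝ), MeasurableSet B →
      ∫ ω, (c * Set.indicator B (fun _ => (1:ℂ)) (Ya ω)) * V ω ∂P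
        = ∫ ω, (∫ x, c * Set.indicator B (fun _ => (1:ℂ)) x ∂(μ ω)) * W ω ∂P := by
    intro c B hB
    calc ∫ ω, (c * Set.indicator B (fun _ => (1:ℂ)) (Ya ω)) * V ω ∂P
        = ∫ ω, c * (Set.indicator B (fun _ => (1:ℂ)) (Ya ω) * V ω) ∂P := by
          apply integral_congr_ae; filter_upwards with ω; ring
      _ = c * ∫ ω, Set.indicator B (fun _ => (1:ℂ)) (Ya ω) * V ω ∂P := integral_const_mul _ _
      _ = c * ∫ ω, (∫ x, Set.indicator B (fun _ => (1:ℂ)) x ∂(μ ω)) * W ω ∂P := by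
          rw [hbase B hB]
      _ = ∫ ω, c * ((∫ x, Set.indicator B (fun _ => (1:ℂ)) x ∂(μ ω)) * W ω) ∂P :=
          (integral_const_mul _ _).symm
      _ = ∫ ω, (∫ x, c * Set.indicator B (fun _ => (1:ℂ)) x ∂(μ ω)) * W ω ∂P := by
          apply integral_congr_ae; filter_upwards with ω
          rw [integral_const_mul]; ring
  -- step 2 : simple functions
  have hsimple : ∀ (f : SimpleFunc ℝ ℂ),
      ∫ ω, f (Ya ω) * V ω ∂P = ∫ ω, (∫ x, f x ∂(μ ω)) * W ω ∂P := by
    intro f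
    induction f using SimpleFunc.induction with
    | const c hs =>
      rename_i B
      have hcoe : ∀ x, (SimpleFunc.piecewise B hs (SimpleFunc.const ℝ c)
          (SimpleFunc.const ℝ 0)) x = c * Set.indicator B (fun _ => (1:ℂ)) x := by
        intro x
        simp only [SimpleFunc.coe_piecewise, SimpleFunc.coe_const, Set.piecewise,
          Set.indicator]
        split <;> simp
      simp only [hcoe]
      exact hconst c B hs
    | @add f g hdisj ihf ihg =>
      obtain ⟨Cf, hCf⟩ := f.exists_forall_norm_le
      obtain ⟨Cg, hCg⟩ := g.exists_forall_norm_le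
      have hfadd : ∀ x, (f + g) x = f x + g x := fun x => by
        simp [SimpleFunc.coe_add]
      simp only [hfadd]
      have hL : ∫ ω, (f (Ya ω) + g (Ya ω)) * V ω ∂P
          = (∫ ω, f (Ya ω) * V ω ∂P) + ∫ ω, g (Ya ω) * V ω ∂P := by
        rw [← integral_add (LHSint f f.measurable Cf hCf) (LHSint g g.measurable Cg hCg)]
        apply integral_congr_ae; filter_upwards with ω; ring
      have hR : ∫ ω, (∫ x, (f x + g x) ∂(μ ω)) * W ω ∂P
          = (∫ ω, (∫ x, f x ∂(μ ω)) * W ω ∂P) + ∫ ω, (∫ x, g x ∂(μ ω)) * W ω ∂P := by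
        rw [← integral_add (RHSint f f.measurable Cf hCf) (RHSint g g.measurable Cg hCg)]
        apply integral_congr_ae; filter_upwards with ω
        haveI := hμprob ω
        rw [integral_add (intble f.measurable.aestronglyMeasurable hCf)
          (intble g.measurable.aestronglyMeasurable hCg)]
        ring
      rw [hL, hR, ihf, ihg]
  -- step 3 : approximation
  have hCnn : 0 ≤ C := le_trans (norm_nonneg (q 0)) (hqC 0)
  set qn : ℕ → SimpleFunc ℝ ℂ :=
    fun n => SimpleFunc.approxOn q hq Set.univ 0 (Set.mem_univ 0) n with hqndef
  have hqn_tendsto : ∀ x, Tendsto (fun n => qn n x) atTop (nhds (q x)) := by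
    intro x
    apply SimpleFunc.tendsto_approxOn hq (Set.mem_univ 0)
    simp
  have hqn_bound : ∀ n x, ‖qn n x‖ ≤ 2 * C := by
    intro n x
    calc ‖qn n x‖ ≤ ‖q x‖ + ‖q x‖ := SimpleFunc.norm_approxOn_zero_le hq _ x n
      _ ≤ 2 * C := by have := hqC x; linarith
  have hT1 : Tendsto (fun n => ∫ ω, qn n (Ya ω) * V ω ∂P) atTop
      (nhds (∫ ω, q (Ya ω) * V ω ∂P)) := by
    apply tendsto_integral_of_dominated_convergence (fun _ => 2 * C)
    · intro n
      exact (((qn n).measurable.comp hYa).mul hV).aestronglyMeasurable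
    · exact integrable_const _
    · intro n
      filter_upwards with ω
      rw [norm_mul]
      calc ‖qn n (Ya ω)‖ * ‖V ω‖ ≤ (2*C) * 1 :=
            mul_le_mul (hqn_bound n _) (hV1 _) (norm_nonneg _) (by linarith)
        _ = 2*C := mul_one _
    · filter_upwards with ω
      exact (hqn_tendsto (Ya ω)).mul_const _
  have hT2 : Tendsto (fun n => ∫ ω, (∫ x, qn n x ∂(μ ω)) * W ω ∂P) atTop
      (nhds (∫ ω, (∫ x, q x ∂(μ ω)) * W ω ∂P)) := by
    apply tendsto_integral_of_dominated_convergence (fun _ => 2 * C)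
    · intro n
      exact (((meas_int_complex (qn n).measurable).comp hμmeas).mul hW).aestronglyMeasurable
    · exact integrable_const _
    · intro n
      filter_upwards with ω
      haveI := hμprob ω
      rw [norm_mul]
      calc ‖∫ x, qn n x ∂(μ ω)‖ * ‖W ω‖ ≤ (2*C) * 1 :=
            mul_le_mul (norm_int_le (qn n).measurable (hqn_bound n)) (hW1 _)
              (norm_nonneg _) (by linarith)
        _ = 2*C := mul_one _
    · filter_upwards with ω
      haveI := hμprob ω
      have hinner : Tendsto (fun n => ∫ x, qn n x ∂(μ ω)) atTop (nhds (∫ x, q x ∂(μ ω))) := by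
        apply tendsto_integral_of_dominated_convergence (fun _ => 2 * C)
        · intro n; exact (qn n).measurable.aestronglyMeasurable
        · exact integrable_const _
        · intro n; filter_upwards with x; exact hqn_bound n x
        · filter_upwards with x; exact hqn_tendsto x
      exact hinner.mul_const _
  have heq : ∀ n, ∫ ω, qn n (Ya ω) * V ω ∂P = ∫ ω, (∫ x, qn n x ∂(μ ω)) * W ω ∂P :=
    fun n => hsimple (qn n)
  exact tendsto_nhds_unique (hT1.congr (fun n => heq n)) hT2

lemma indicator_cast (B : Set ℝ) (y : ℝ) :
    Set.indicator B (fun _ => (1:ℂ)) y = ((Set.indicator B (fun _ => (1:ℝ)) y : ℝ) : ℂ) := by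
  by_cases h : y ∈ B <;> simp [Set.indicator_apply, h]

lemma indicator_norm_le (B : Set ℝ) (y : ℝ) :
    ‖Set.indicator B (fun _ => (1:ℂ)) y‖ ≤ 1 := by
  by_cases h : y ∈ B <;> simp [Set.indicator_apply, h]

lemma indicator_real01 (B : Set ℝ) (y : ℝ) :
    0 ≤ Set.indicator B (fun _ => (1:ℝ)) y ∧ Set.indicator B (fun _ => (1:ℝ)) y ≤ 1 := by
  by_cases h : y ∈ B <;> simp [Set.indicator_apply, h]

lemma toReal01 (ν : Measure ℝ) [IsProbabilityMeasure ν] (B : Set ℝ) :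
    0 ≤ (ν B).toReal ∧ (ν B).toReal ≤ 1 := by
  constructor
  · exact ENNReal.toReal_nonneg
  · have h1 : ν B ≤ 1 := prob_le_one
    calc (ν B).toReal ≤ (1 : ENNReal).toReal := ENNReal.toReal_mono ENNReal.one_ne_top h1
      _ = 1 := ENNReal.toReal_one

lemma aux_product {Ω : Type*} [m0 : MeasurableSpace Ω] (P : Measure Ω) [IsProbabilityMeasure P]
    (μ : Ω → Measure ℝ) (hμmeas : Measurable μ) (hμprob : ∀ ω, IsProbabilityMeasure (μ ω))
    (Y : ℕ → Ω → ℝ) (hY : ∀ k, Measurable (Y k))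
    (hcond : ∀ (J : Finset ℕ) (B : ℕ → Set ℝ), (∀ i, MeasurableSet (B i)) →
      (P[(fun ω => ∏ i ∈ J, Set.indicator (B i) (fun _ => (1:ℝ)) (Y i ω)) |
          MeasurableSpace.comap μ inferInstance])
        =ᵐ[P] fun ω => ∏ i ∈ J, ((μ ω) (B i)).toReal) :
    ∀ (J K : Finset ℕ), Disjoint J K →
    ∀ (f : ℕ → ℝ → ℂ), (∀ i, Measurable (f i)) → (∀ i x, ‖f i x‖ ≤ 1) →
    ∀ (B : ℕ → Set ℝ), (∀ i, MeasurableSet (B i)) →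
    ∀ (g : Measure ℝ → ℝ), Measurable g → (∀ ν, |g ν| ≤ 1) →
    ∫ ω, ((g (μ ω) : ℝ) : ℂ) * ((∏ i ∈ J, f i (Y i ω))
        * ∏ i ∈ K, Set.indicator (B i) (fun _ => (1:ℂ)) (Y i ω)) ∂P
      = ∫ ω, ((g (μ ω) : ℝ) : ℂ) * ((∏ i ∈ J, ∫ x, f i x ∂(μ ω))
        * ∏ i ∈ K, (((μ ω) (B i)).toReal : ℂ)) ∂P := by
  intro J
  induction J using Finset.induction_on with
  | empty =>
    intro K _ f hf hf1 B hB g hg hg1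
    simp only [Finset.prod_empty, one_mul]
    -- reduce to a real statement via condexp
    have hreal : ∫ ω, g (μ ω) * (∏ i ∈ K, Set.indicator (B i) (fun _ => (1:ℝ)) (Y i ω)) ∂P
        = ∫ ω, g (μ ω) * (∏ i ∈ K, ((μ ω) (B i)).toReal) ∂P := by
      have hm : MeasurableSpace.comap μ inferInstance ≤ m0 := hμmeas.comap_le
      haveI : IsFiniteMeasure (P.trim hm) := isFiniteMeasure_trim hm
      haveI : SigmaFinite (P.trim hm) := inferInstance
      have hμm : Measurable[MeasurableSpace.comap μ inferInstance] μ :=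
        Measurable.of_comap_le le_rfl
      have hgm : StronglyMeasurable[MeasurableSpace.comap μ inferInstance]
          (fun ω => g (μ ω)) := (hg.comp hμm).stronglyMeasurable
      set F : Ω → ℝ := fun ω => ∏ i ∈ K, Set.indicator (B i) (fun _ => (1:ℝ)) (Y i ω)
        with hFdef
      have hFmeas : Measurable F := by
        apply Finset.measurable_prod
        intro i _
        exact (measurable_const.indicator (hB i)).comp (hY i)
      have hF01 : ∀ ω, 0 ≤ F ω ∧ F ω ≤ 1 := by
        intro ω
        constructor
        · exact Finset.prod_nonneg fun i _ => (indicator_real01 _ _).1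
        · exact Finset.prod_le_one (fun i _ => (indicator_real01 _ _).1)
            (fun i _ => (indicator_real01 _ _).2)
      have hFint : Integrable F P := by
        refine intble hFmeas.aestronglyMeasurable (C := 1) fun ω => ?_
        rw [Real.norm_eq_abs, abs_le]
        exact ⟨by linarith [(hF01 ω).1], (hF01 ω).2⟩
      have hgFint : Integrable ((fun ω => g (μ ω)) * F) P := by
        refine intble ((hg.comp hμmeas).mul hFmeas).aestronglyMeasurable (C := 1)
          fun ω => ?_
        simp only [Pi.mul_apply]
        rw [Real.norm_eq_abs, abs_mul]
        calc |g (μ ω)| * |F ω| ≤ 1 * 1 := by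
              apply mul_le_mul (hg1 _) _ (abs_nonneg _) zero_le_one
              rw [abs_le]; exact ⟨by linarith [(hF01 ω).1], (hF01 ω).2⟩
          _ = 1 := one_mul 1
      have hpull := condExp_mul_of_stronglyMeasurable_left hgm hgFint hFint
      have hcondK := hcond K B hB
      calc ∫ ω, g (μ ω) * F ω ∂P
          = ∫ ω, ((fun ω => g (μ ω)) * F) ω ∂P := by rfl
        _ = ∫ ω, (P[(fun ω => g (μ ω)) * F|MeasurableSpace.comap μ inferInstance]) ω ∂P :=
            (integral_condExp hm).symm
        _ = ∫ ω, ((fun ω => g (μ ω)) * P[F|MeasurableSpace.comap μ inferInstance]) ω ∂P :=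
            integral_congr_ae hpull
        _ = ∫ ω, g (μ ω) * (∏ i ∈ K, ((μ ω) (B i)).toReal) ∂P := by
            apply integral_congr_ae
            filter_upwards [hcondK] with ω hω
            simp only [Pi.mul_apply]
            rw [hω]
    -- now cast
    calc ∫ ω, ((g (μ ω) : ℝ) : ℂ) * ∏ i ∈ K, Set.indicator (B i) (fun _ => (1:ℂ)) (Y i ω) ∂P
        = ∫ ω, ((g (μ ω) * ∏ i ∈ K, Set.indicator (B i) (fun _ => (1:ℝ)) (Y i ω) : ℝ) : ℂ) ∂P := by
          apply integral_congr_ae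
          filter_upwards with ω
          rw [Complex.ofReal_mul, Complex.ofReal_prod]
          congr 1
          exact Finset.prod_congr rfl fun i _ => indicator_cast _ _
      _ = (((∫ ω, g (μ ω) * ∏ i ∈ K, Set.indicator (B i) (fun _ => (1:ℝ)) (Y i ω) ∂P : ℝ)) : ℂ) :=
          integral_ofReal
      _ = (((∫ ω, g (μ ω) * ∏ i ∈ K, ((μ ω) (B i)).toReal ∂P : ℝ)) : ℂ) := by rw [hreal]
      _ = ∫ ω, ((g (μ ω) * ∏ i ∈ K, ((μ ω) (B i)).toReal : ℝ) : ℂ) ∂P := integral_ofReal.symm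
      _ = ∫ ω, ((g (μ ω) : ℝ) : ℂ) * ∏ i ∈ K, (((μ ω) (B i)).toReal : ℂ) ∂P := by
          apply integral_congr_ae
          filter_upwards with ω
          rw [Complex.ofReal_mul, Complex.ofReal_prod]
  | @insert a s ha ih =>
    intro K hJK f hf hf1 B hB g hg hg1
    rw [Finset.disjoint_insert_left] at hJK
    obtain ⟨haK, hsK⟩ := hJK
    set V : Ω → ℂ := fun ω => ((g (μ ω) : ℝ) : ℂ) * ((∏ i ∈ s, f i (Y i ω))
      * ∏ i ∈ K, Set.indicator (B i) (fun _ => (1:ℂ)) (Y i ω)) with hVdef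
    set W : Ω → ℂ := fun ω => ((g (μ ω) : ℝ) : ℂ) * ((∏ i ∈ s, ∫ x, f i x ∂(μ ω))
      * ∏ i ∈ K, (((μ ω) (B i)).toReal : ℂ)) with hWdef
    have hVmeas : Measurable V := by
      apply ((Complex.measurable_ofReal.comp (hg.comp hμmeas)).mul _)
      apply Measurable.mul
      · exact Finset.measurable_prod _ fun i _ => (hf i).comp (hY i)
      · exact Finset.measurable_prod _ fun i _ =>
          (measurable_const.indicator (hB i)).comp (hY i)
    have hWmeas : Measurable W := by
      apply ((Complex.measurable_ofReal.comp (hg.comp hμmeas)).mul _)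
      apply Measurable.mul
      · exact Finset.measurable_prod _ fun i _ => (meas_int_complex (hf i)).comp hμmeas
      · exact Finset.measurable_prod _ fun i _ =>
          Complex.measurable_ofReal.comp
            ((Measure.measurable_coe (hB i)).comp hμmeas).ennreal_toReal
    have hV1 : ∀ ω, ‖V ω‖ ≤ 1 := by
      intro ω
      rw [hVdef]
      simp only [norm_mul, Complex.norm_real, Real.norm_eq_abs]
      calc |g (μ ω)| * (‖∏ i ∈ s, f i (Y i ω)‖
            * ‖∏ i ∈ K, Set.indicator (B i) (fun _ => (1:ℂ)) (Y i ω)‖) ≤ 1 * (1 * 1) := by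
            apply mul_le_mul (hg1 _) _ (by positivity) zero_le_one
            apply mul_le_mul _ _ (norm_nonneg _) zero_le_one
            · rw [norm_prod]
              exact Finset.prod_le_one (fun i _ => norm_nonneg _) (fun i _ => hf1 i _)
            · rw [norm_prod]
              exact Finset.prod_le_one (fun i _ => norm_nonneg _)
                (fun i _ => indicator_norm_le _ _)
        _ = 1 := by norm_num
    have hW1 : ∀ ω, ‖W ω‖ ≤ 1 := by
      intro ω
      haveI := hμprob ω
      rw [hWdef]
      simp only [norm_mul, Complex.norm_real, Real.norm_eq_abs]
      calc |g (μ ω)| * (‖∏ i ∈ s, ∫ x, f i x ∂(μ ω)‖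
            * ‖∏ i ∈ K, (((μ ω) (B i)).toReal : ℂ)‖) ≤ 1 * (1 * 1) := by
            apply mul_le_mul (hg1 _) _ (by positivity) zero_le_one
            apply mul_le_mul _ _ (norm_nonneg _) zero_le_one
            · rw [norm_prod]
              exact Finset.prod_le_one (fun i _ => norm_nonneg _)
                (fun i _ => norm_int_le (hf i) (hf1 i))
            · rw [norm_prod]
              refine Finset.prod_le_one (fun i _ => norm_nonneg _) (fun i _ => ?_)
              rw [Complex.norm_real, Real.norm_eq_abs,
                _root_.abs_of_nonneg (toReal01 (μ ω) (B i)).1]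
              exact (toReal01 (μ ω) (B i)).2
        _ = 1 := by norm_num
    have hbase : ∀ B₀ : Set ℝ, MeasurableSet B₀ →
        ∫ ω, Set.indicator B₀ (fun _ => (1:ℂ)) (Y a ω) * V ω ∂P
          = ∫ ω, (∫ x, Set.indicator B₀ (fun _ => (1:ℂ)) x ∂(μ ω)) * W ω ∂P := by
      intro B₀ hB₀
      have hdisj' : Disjoint s (insert a K) :=
        Finset.disjoint_insert_right.mpr ⟨ha, hsK⟩
      have hB' : ∀ i, MeasurableSet (Function.update B a B₀ i) := by
        intro i
        by_cases h : i = a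
        · subst h; rw [Function.update_self]; exact hB₀
        · rw [Function.update_of_ne h]; exact hB i
      have := ih (insert a K) hdisj' f hf hf1 (Function.update B a B₀) hB' g hg hg1
      calc ∫ ω, Set.indicator B₀ (fun _ => (1:ℂ)) (Y a ω) * V ω ∂P
          = ∫ ω, ((g (μ ω) : ℝ) : ℂ) * ((∏ i ∈ s, f i (Y i ω))
              * ∏ i ∈ insert a K, Set.indicator (Function.update B a B₀ i) (fun _ => (1:ℂ))
                  (Y i ω)) ∂P := by
            apply integral_congr_ae
            filter_upwards with ω
            rw [Finset.prod_insert haK, Function.update_self]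
            have : ∏ i ∈ K, Set.indicator (Function.update B a B₀ i) (fun _ => (1:ℂ)) (Y i ω)
                = ∏ i ∈ K, Set.indicator (B i) (fun _ => (1:ℂ)) (Y i ω) :=
              Finset.prod_congr rfl fun i hi => by
                rw [Function.update_of_ne (ne_of_mem_of_not_mem hi haK)]
            rw [this, hVdef]
            ring
        _ = ∫ ω, ((g (μ ω) : ℝ) : ℂ) * ((∏ i ∈ s, ∫ x, f i x ∂(μ ω))
              * ∏ i ∈ insert a K, (((μ ω) (Function.update B a B₀ i)).toReal : ℂ)) ∂P := this
        _ = ∫ ω, (∫ x, Set.indicator B₀ (fun _ => (1:ℂ)) x ∂(μ ω)) * W ω ∂P := by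
            apply integral_congr_ae
            filter_upwards with ω
            rw [Finset.prod_insert haK, Function.update_self]
            have h1 : ∏ i ∈ K, (((μ ω) (Function.update B a B₀ i)).toReal : ℂ)
                = ∏ i ∈ K, (((μ ω) (B i)).toReal : ℂ) :=
              Finset.prod_congr rfl fun i hi => by
                rw [Function.update_of_ne (ne_of_mem_of_not_mem hi haK)]
            have h2 : ∫ x, Set.indicator B₀ (fun _ => (1:ℂ)) x ∂(μ ω)
                = (((μ ω) B₀).toReal : ℂ) := by
              rw [integral_indicator_const (1:ℂ) hB₀]
              simp [Complex.real_smul, Measure.real]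
            rw [h1, h2, hWdef]
            ring
    have hslot := slot_ext P μ hμmeas hμprob (Y a) (hY a) V W hVmeas hV1 hWmeas hW1 hbase
      (hf a) (C := 1) (hf1 a)
    calc ∫ ω, ((g (μ ω) : ℝ) : ℂ) * ((∏ i ∈ insert a s, f i (Y i ω))
          * ∏ i ∈ K, Set.indicator (B i) (fun _ => (1:ℂ)) (Y i ω)) ∂P
        = ∫ ω, f a (Y a ω) * V ω ∂P := by
          apply integral_congr_ae
          filter_upwards with ω
          rw [Finset.prod_insert ha, hVdef]
          ring
      _ = ∫ ω, (∫ x, f a x ∂(μ ω)) * W ω ∂P := hslot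
      _ = ∫ ω, ((g (μ ω) : ℝ) : ℂ) * ((∏ i ∈ insert a s, ∫ x, f i x ∂(μ ω))
          * ∏ i ∈ K, (((μ ω) (B i)).toReal : ℂ)) ∂P := by
          apply integral_congr_ae
          filter_upwards with ω
          rw [Finset.prod_insert ha, hWdef]
          ring

end AuxStmt18

theorem stmt_18 {Ω : Type*} [m0 : MeasurableSpace Ω] (P : Measure Ω) [IsProbabilityMeasure P]
    (μ : Ω → Measure ℝ) (hμmeas : Measurable μ) (hμprob : ∀ ω, IsProbabilityMeasure (μ ω))
    (Y : ℕ → Ω → ℝ) (hY : ∀ k, Measurable (Y k))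
    -- (Y k) are conditionally i.i.d. given the σ-algebra generated by μ,
    -- with conditional distribution μ:
    (hcond : ∀ (J : Finset ℕ) (B : ℕ → Set ℝ), (∀ i, MeasurableSet (B i)) →
      (P[(fun ω => ∏ i ∈ J, Set.indicator (B i) (fun _ => (1:ℝ)) (Y i ω)) |
          MeasurableSpace.comap μ inferInstance])
        =ᵐ[P] fun ω => ∏ i ∈ J, ((μ ω) (B i)).toReal)
    (hsq : ∀ᵐ ω ∂P, Integrable (fun x => x ^ 2) (μ ω))
    (X Z : Ω → ℝ)
    (hX : ∀ ω, X ω = ∫ x, x ∂(μ ω))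
    (hZ : ∀ ω, Z ω = (∫ x, x ^ 2 ∂(μ ω)) - (X ω) ^ 2) :
    -- convergence in distribution to the variance mixture N(0, Z), expressed
    -- through convergence of characteristic functions to t ↦ E[exp(-Z t²/2)]:
    ∀ t : ℝ,
      Tendsto (fun N : ℕ =>
          ∫ ω, Complex.exp (Complex.I * (t : ℂ) *
            (((∑ k ∈ Finset.Icc 1 N, (Y k ω - X ω)) / Real.sqrt N : ℝ) : ℂ)) ∂P)
        atTop
        (nhds (∫ ω, Complex.exp (-(((Z ω) : ℝ) : ℂ) * (t : ℂ) ^ 2 / 2) ∂P)) := by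
  intro t
  have hXmeas : Measurable X := by
    have hXeq : X = (fun ν : Measure ℝ => ∫ x, x ∂ν) ∘ μ := funext fun ω => hX ω
    rw [hXeq]
    exact (meas_int_real measurable_id).comp hμmeas
  -- the sequence of "mixture" integrands
  set A : ℕ → Ω → ℂ := fun N ω =>
    Complex.exp (-(Complex.I * ((t / Real.sqrt N : ℝ) : ℂ) * (N : ℂ) * ((X ω : ℝ) : ℂ)))
      * (∫ x, Complex.exp (Complex.I * ((t / Real.sqrt N : ℝ) : ℂ) * (x:ℂ)) ∂(μ ω)) ^ N
    with hAdef
  have hfNmeas : ∀ N : ℕ, Measurable fun x : ℝ =>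
      Complex.exp (Complex.I * ((t / Real.sqrt N : ℝ) : ℂ) * (x:ℂ)) := by
    intro N
    exact Complex.measurable_exp.comp (Complex.measurable_ofReal.const_mul _)
  have hfN1 : ∀ (N : ℕ) (x : ℝ),
      ‖Complex.exp (Complex.I * ((t / Real.sqrt N : ℝ) : ℂ) * (x:ℂ))‖ ≤ 1 := by
    intro N x
    have harg : Complex.I * ((t / Real.sqrt N : ℝ) : ℂ) * (x:ℂ)
        = Complex.I * (((t / Real.sqrt N) * x : ℝ) : ℂ) := by push_cast; ring
    rw [harg, norm_exp_I_mul_real]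
  -- star identity
  have hstar : ∀ N : ℕ, 1 ≤ N →
      (∫ ω, Complex.exp (Complex.I * (t : ℂ) *
          (((∑ k ∈ Finset.Icc 1 N, (Y k ω - X ω)) / Real.sqrt N : ℝ) : ℂ)) ∂P)
        = ∫ ω, A N ω ∂P := by
    intro N hN
    set sN : ℝ := t / Real.sqrt N with hsNdef
    set fN : ℝ → ℂ := fun x => Complex.exp (Complex.I * (sN : ℂ) * (x:ℂ)) with hfNdef
    set h : Measure ℝ → ℂ := fun ν =>
      Complex.exp (-(Complex.I * (sN : ℂ) * (N : ℂ) * ((∫ x, x ∂ν : ℝ) : ℂ))) with hhdef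
    have hhmeas : Measurable h := by
      apply Complex.measurable_exp.comp
      exact ((Complex.measurable_ofReal.comp (meas_int_real measurable_id)).const_mul
        (Complex.I * (sN : ℂ) * (N : ℂ))).neg
    have hh1 : ∀ ν, ‖h ν‖ ≤ 1 := by
      intro ν
      have harg : Complex.I * (sN : ℂ) * (N : ℂ) * ((∫ x, x ∂ν : ℝ) : ℂ)
          = Complex.I * ((sN * N * (∫ x, x ∂ν) : ℝ) : ℂ) := by push_cast; ring
      rw [hhdef]
      simp only
      rw [harg, norm_exp_neg_I_mul_real]
    set Q1 : Ω → ℂ := fun ω => ∏ k ∈ Finset.Icc 1 N, fN (Y k ω) with hQ1def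
    set Q2 : Ω → ℂ := fun ω => ∏ k ∈ Finset.Icc 1 N, (∫ x, fN x ∂(μ ω)) with hQ2def
    have hQ1meas : Measurable Q1 :=
      Finset.measurable_prod _ fun k _ => (hfNmeas N).comp (hY k)
    have hQ2meas : Measurable Q2 :=
      Finset.measurable_prod _ fun k _ => (meas_int_complex (hfNmeas N)).comp hμmeas
    have hQ1bd : ∀ ω, ‖Q1 ω‖ ≤ 1 := by
      intro ω
      rw [hQ1def]
      simp only [norm_prod]
      exact Finset.prod_le_one (fun i _ => norm_nonneg _) (fun i _ => hfN1 N _)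
    have hQ2bd : ∀ ω, ‖Q2 ω‖ ≤ 1 := by
      intro ω
      haveI := hμprob ω
      rw [hQ2def]
      simp only [norm_prod]
      exact Finset.prod_le_one (fun i _ => norm_nonneg _)
        (fun i _ => norm_int_le (hfNmeas N) (hfN1 N))
    -- main identity with real weights
    have hmain : ∀ (g : Measure ℝ → ℝ), Measurable g → (∀ ν, |g ν| ≤ 1) →
        ∫ ω, ((g (μ ω) : ℝ) : ℂ) * Q1 ω ∂P = ∫ ω, ((g (μ ω) : ℝ) : ℂ) * Q2 ω ∂P := by
      intro g hg hg1
      have := aux_product P μ hμmeas hμprob Y hY hcond (Finset.Icc 1 N) ∅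
        (Finset.disjoint_empty_right _) (fun _ => fN) (fun _ => hfNmeas N)
        (fun _ x => hfN1 N x) (fun _ => ∅) (fun _ => MeasurableSet.empty) g hg hg1
      simpa only [Finset.prod_empty, mul_one] using this
    -- decompose h into real and imaginary parts
    have hdec : ∀ (Q : Ω → ℂ), Measurable Q → (∀ ω, ‖Q ω‖ ≤ 1) →
        ∫ ω, h (μ ω) * Q ω ∂P
          = (∫ ω, (((h (μ ω)).re : ℝ) : ℂ) * Q ω ∂P)
            + (∫ ω, (((h (μ ω)).im : ℝ) : ℂ) * Q ω ∂P) * Complex.I := by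
      intro Q hQ hQbd
      have i1 : Integrable (fun ω => (((h (μ ω)).re : ℝ) : ℂ) * Q ω) P := by
        refine intble ((Complex.measurable_ofReal.comp
          (Complex.measurable_re.comp (hhmeas.comp hμmeas))).mul hQ).aestronglyMeasurable
          (C := 1) fun ω => ?_
        rw [norm_mul, Complex.norm_real, Real.norm_eq_abs]
        calc |(h (μ ω)).re| * ‖Q ω‖ ≤ 1 * 1 := by
              apply mul_le_mul _ (hQbd _) (norm_nonneg _) zero_le_one
              exact le_trans (Complex.abs_re_le_norm _) (hh1 _)
          _ = 1 := one_mul 1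
      have i2 : Integrable (fun ω => (((h (μ ω)).im : ℝ) : ℂ) * Q ω) P := by
        refine intble ((Complex.measurable_ofReal.comp
          (Complex.measurable_im.comp (hhmeas.comp hμmeas))).mul hQ).aestronglyMeasurable
          (C := 1) fun ω => ?_
        rw [norm_mul, Complex.norm_real, Real.norm_eq_abs]
        calc |(h (μ ω)).im| * ‖Q ω‖ ≤ 1 * 1 := by
              apply mul_le_mul _ (hQbd _) (norm_nonneg _) zero_le_one
              exact le_trans (Complex.abs_im_le_norm _) (hh1 _)
          _ = 1 := one_mul 1
      calc ∫ ω, h (μ ω) * Q ω ∂P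
          = ∫ ω, ((((h (μ ω)).re : ℝ) : ℂ) * Q ω
              + ((((h (μ ω)).im : ℝ) : ℂ) * Q ω) * Complex.I) ∂P := by
            apply integral_congr_ae
            filter_upwards with ω
            conv_lhs => rw [← Complex.re_add_im (h (μ ω))]
            ring
        _ = (∫ ω, (((h (μ ω)).re : ℝ) : ℂ) * Q ω ∂P)
            + ∫ ω, ((((h (μ ω)).im : ℝ) : ℂ) * Q ω) * Complex.I ∂P :=
            integral_add i1 (i2.mul_const _)
        _ = (∫ ω, (((h (μ ω)).re : ℝ) : ℂ) * Q ω ∂P)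
            + (∫ ω, (((h (μ ω)).im : ℝ) : ℂ) * Q ω ∂P) * Complex.I := by
            rw [integral_mul_const]
    have hgen : ∫ ω, h (μ ω) * Q1 ω ∂P = ∫ ω, h (μ ω) * Q2 ω ∂P := by
      rw [hdec Q1 hQ1meas hQ1bd, hdec Q2 hQ2meas hQ2bd,
        hmain (fun ν => (h ν).re) (Complex.measurable_re.comp hhmeas)
          (fun ν => le_trans (Complex.abs_re_le_norm _) (hh1 ν)),
        hmain (fun ν => (h ν).im) (Complex.measurable_im.comp hhmeas)
          (fun ν => le_trans (Complex.abs_im_le_norm _) (hh1 ν))]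
    -- pointwise identification of LHS integrand
    have hptw : ∀ ω, Complex.exp (Complex.I * (t : ℂ) *
        (((∑ k ∈ Finset.Icc 1 N, (Y k ω - X ω)) / Real.sqrt N : ℝ) : ℂ))
          = h (μ ω) * Q1 ω := by
      intro ω
      rw [hhdef, hQ1def]
      simp only
      rw [← hX ω, hfNdef]
      simp only
      rw [← Complex.exp_sum, ← Complex.exp_add]
      congr 1
      have hsum : ∑ k ∈ Finset.Icc 1 N, (Y k ω - X ω)
          = (∑ k ∈ Finset.Icc 1 N, Y k ω) - N * X ω := by
        rw [Finset.sum_sub_distrib, Finset.sum_const, Nat.card_Icc]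
        simp [nsmul_eq_mul]
      rw [hsum]
      have hpull : ∑ k ∈ Finset.Icc 1 N, Complex.I * (sN : ℂ) * ((Y k ω : ℝ) : ℂ)
          = Complex.I * (sN : ℂ) * (((∑ k ∈ Finset.Icc 1 N, Y k ω : ℝ)) : ℂ) := by
        rw [← Finset.mul_sum, ← Complex.ofReal_sum]
      rw [hpull]
      simp only [hsNdef]
      push_cast
      ring
    -- pointwise identification of RHS integrand
    have hptw2 : ∀ ω, h (μ ω) * Q2 ω = A N ω := by
      intro ω
      rw [hhdef, hQ2def, hAdef]
      simp only
      rw [← hX ω, Finset.prod_const, Nat.card_Icc]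
      simp [hsNdef, hfNdef]
    calc ∫ ω, Complex.exp (Complex.I * (t : ℂ) *
            (((∑ k ∈ Finset.Icc 1 N, (Y k ω - X ω)) / Real.sqrt N : ℝ) : ℂ)) ∂P
        = ∫ ω, h (μ ω) * Q1 ω ∂P :=
          integral_congr_ae (Filter.Eventually.of_forall hptw)
      _ = ∫ ω, h (μ ω) * Q2 ω ∂P := hgen
      _ = ∫ ω, A N ω ∂P := integral_congr_ae (Filter.Eventually.of_forall hptw2)
  -- dominated convergence
  have hDCT : Tendsto (fun N : ℕ => ∫ ω, A N ω ∂P) atTop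
      (nhds (∫ ω, Complex.exp (-((Z ω : ℝ) : ℂ) * (t : ℂ) ^ 2 / 2) ∂P)) := by
    apply tendsto_integral_of_dominated_convergence (fun _ => (1:ℝ))
    · intro N
      apply Measurable.aestronglyMeasurable
      apply Measurable.mul
      · exact Complex.measurable_exp.comp
          (((Complex.measurable_ofReal.comp hXmeas).const_mul _).neg)
      · exact ((meas_int_complex (hfNmeas N)).comp hμmeas).pow_const N
    · exact integrable_const _
    · intro N
      filter_upwards with ω
      haveI := hμprob ω
      rw [hAdef]
      simp only
      rw [norm_mul]
      have h1 : ‖Complex.exp (-(Complex.I * ((t / Real.sqrt N : ℝ) : ℂ) * (N : ℂ)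
          * ((X ω : ℝ) : ℂ)))‖ = 1 := by
        have harg : Complex.I * ((t / Real.sqrt N : ℝ) : ℂ) * (N : ℂ) * ((X ω : ℝ) : ℂ)
            = Complex.I * (((t / Real.sqrt N) * N * X ω : ℝ) : ℂ) := by push_cast; ring
        rw [harg, norm_exp_neg_I_mul_real]
      rw [h1, one_mul, norm_pow]
      calc ‖∫ x, Complex.exp (Complex.I * ((t / Real.sqrt N : ℝ) : ℂ) * (x:ℂ)) ∂(μ ω)‖ ^ N
          ≤ 1 ^ N := by
            apply pow_le_pow_left₀ (norm_nonneg _)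
            exact norm_int_le (hfNmeas N) (hfN1 N)
        _ = 1 := one_pow N
    · filter_upwards [hsq] with ω hω
      haveI := hμprob ω
      have hclaim := pointwise_claim (μ ω) hω t
      have hconst : Complex.exp ((-(((∫ x, x ^ 2 ∂(μ ω)) - (∫ x, x ∂(μ ω)) ^ 2) * t ^ 2 / 2)
          : ℝ) : ℂ) = Complex.exp (-((Z ω : ℝ) : ℂ) * (t : ℂ) ^ 2 / 2) := by
        congr 1
        rw [hZ ω, hX ω]
        push_cast
        ring
      rw [hconst] at hclaim
      have hfun : (fun N : ℕ => A N ω) = fun N : ℕ =>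
          Complex.exp (-(Complex.I * ((t / Real.sqrt N : ℝ) : ℂ) * (N : ℂ)
            * ((∫ x, x ∂(μ ω) : ℝ) : ℂ)))
          * (∫ x, Complex.exp (Complex.I * ((t / Real.sqrt N : ℝ) : ℂ) * (x:ℂ)) ∂(μ ω)) ^ N := by
        funext N
        rw [hAdef]
        simp only
        rw [← hX ω]
      rw [hfun]
      exact hclaim
  apply hDCT.congr'
  filter_upwards [eventually_ge_atTop 1] with N hN
  exact (hstar N hN).symm
end
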